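/- arXiv:2009.03747 — 11 statements merged into one kernel-verified Lean document; each statement's English description precedes it below -/
import Mathlib

section
/- If a finite multigraph (self-loops allowed) has degree sequence (d_1,...,d_n) with (1/2)·Σ d_i ≥ max_i d_i, then every self-loop can be eliminated by degree-preserving edge switches: there exists a loopless multigraph with the same degree sequence. -/
/-- Degree of vertex `v` in a loopless multigraph given as a multiset of edges. -/
def mdeg {n : ℕ} (M : Multiset (Sym2 (Fin n))) (v : Fin n) : ℕ :=
  Multiset.countP (fun e => v ∈ e) M

/-- Degree of vertex `v` in a multigraph possibly containing self-loops:
a self-loop at `v` contributes 2, any other incident edge contributes 1. -/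
def ldeg {n : ℕ} (M : Multiset (Sym2 (Fin n))) (v : Fin n) : ℕ :=
  (M.map (fun e => if e = Sym2.diag v then 2 else if v ∈ e then 1 else 0)).sum

lemma mdeg_cons {n : ℕ} (e : Sym2 (Fin n)) (M : Multiset (Sym2 (Fin n))) (v : Fin n) :
    mdeg (e ::ₘ M) v = (if v ∈ e then 1 else 0) + mdeg M v := by
  simp [mdeg, Multiset.countP_cons]
  omega

lemma edge_sum {n : ℕ} (e : Sym2 (Fin n)) :
    ∑ v, (if e = Sym2.diag v then 2 else if v ∈ e then 1 else 0) = 2 := by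
  induction e using Sym2.ind with
  | _ a b =>
    rcases eq_or_ne a b with rfl | hab
    · have : ∀ v : Fin n,
          (if s(a, a) = Sym2.diag v then 2 else if v ∈ s(a, a) then 1 else 0)
            = if v = a then 2 else 0 := by
        intro v
        by_cases hv : v = a
        · subst hv; simp [Sym2.diag]
        · have : s(a, a) ≠ Sym2.diag v := by
            simp [Sym2.diag, Sym2.eq_iff]
            intro h; exact (hv h.symm).elim
          simp [this, Sym2.mem_iff, hv, Ne.symm hv]
      rw [Finset.sum_congr rfl fun v _ => this v]
      simp
    · have hd : ∀ v : Fin n, s(a, b) ≠ Sym2.diag v := by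
        intro v
        simp [Sym2.diag, Sym2.eq_iff]
        intro h1 h2
        first
        | exact hab (h1.trans h2.symm)
        | exact hab (h2.trans h1.symm)
      have : ∀ v : Fin n,
          (if s(a, b) = Sym2.diag v then 2 else if v ∈ s(a, b) then 1 else 0)
            = (if v = a then 1 else 0) + (if v = b then 1 else 0) := by
        intro v
        rw [if_neg (hd v)]
        by_cases hva : v = a
        · subst hva
          simp [Sym2.mem_iff, Ne.symm hab]
          exact hab
        · by_cases hvb : v = b
          · subst hvb; simp [Sym2.mem_iff, hva]
          · simp [Sym2.mem_iff, hva, hvb]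
      rw [Finset.sum_congr rfl fun v _ => this v, Finset.sum_add_distrib]
      simp

lemma sum_ldeg {n : ℕ} (M : Multiset (Sym2 (Fin n))) :
    ∑ i, ldeg M i = 2 * Multiset.card M := by
  induction M using Multiset.induction with
  | empty => simp [ldeg]
  | cons e M ih =>
    have hl : ∀ v, ldeg (e ::ₘ M) v =
        (if e = Sym2.diag v then 2 else if v ∈ e then 1 else 0) + ldeg M v := by
      intro v; simp [ldeg]
    rw [Finset.sum_congr rfl fun v _ => hl v, Finset.sum_add_distrib, ih, edge_sum]
    simp
    ring

lemma realize {n : ℕ} : ∀ N (d : Fin n → ℕ), ∑ i, d i = N → Even N →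
    (∀ v, 2 * d v ≤ N) →
    ∃ M' : Multiset (Sym2 (Fin n)), (∀ e ∈ M', ¬ e.IsDiag) ∧ ∀ v, mdeg M' v = d v := by
  intro N
  induction N using Nat.strong_induction_on with
  | _ N ih =>
    intro d hsum heven hmax
    rcases Nat.eq_zero_or_pos N with rfl | hpos
    · refine ⟨0, by simp, fun v => ?_⟩
      have hv : d v = 0 :=
        Finset.sum_eq_zero_iff.mp hsum v (Finset.mem_univ v)
      simp [mdeg, hv]
    · -- choose v of maximal degree
      have hne : (Finset.univ : Finset (Fin n)).Nonempty := by
        by_contra hempty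
        rw [Finset.not_nonempty_iff_eq_empty] at hempty
        rw [hempty] at hsum
        simp at hsum
        omega
      obtain ⟨v, -, hvmax⟩ := Finset.exists_max_image Finset.univ d hne
      have hsplit : d v + ∑ u ∈ Finset.univ.erase v, d u = N := by
        rw [Finset.add_sum_erase _ d (Finset.mem_univ v), hsum]
      have herase_pos : 0 < ∑ u ∈ Finset.univ.erase v, d u := by
        by_contra hz
        push_neg at hz
        interval_cases h : (∑ u ∈ Finset.univ.erase v, d u)
        · have h1 := hmax v
          omega
      have hne2 : (Finset.univ.erase v).Nonempty := by
        by_contra hempty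
        rw [Finset.not_nonempty_iff_eq_empty] at hempty
        rw [hempty] at herase_pos
        simp at herase_pos
      obtain ⟨w, hwmem, hwmax⟩ := Finset.exists_max_image (Finset.univ.erase v) d hne2
      have hwv : w ≠ v := Finset.ne_of_mem_erase hwmem
      have hdw : 0 < d w := by
        by_contra hz
        push_neg at hz
        have : ∑ u ∈ Finset.univ.erase v, d u = 0 := by
          apply Finset.sum_eq_zero
          intro u hu
          have := hwmax u hu
          omega
        omega
      have hdv : 0 < d v := lt_of_lt_of_le hdw (hvmax w (Finset.mem_univ w))
      -- new degree sequence
      set d' : Fin n → ℕ := fun u => if u = v then d v - 1 else if u = w then d w - 1 else d u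
        with hd'
      have hsplit2 : d v + (d w + ∑ u ∈ (Finset.univ.erase v).erase w, d u) = N := by
        rw [Finset.add_sum_erase _ d hwmem]
        exact hsplit
      have hRsum : ∑ u ∈ (Finset.univ.erase v).erase w, d' u
          = ∑ u ∈ (Finset.univ.erase v).erase w, d u := by
        apply Finset.sum_congr rfl
        intro u hu
        have hu1 : u ≠ w := Finset.ne_of_mem_erase hu
        have hu2 : u ≠ v := Finset.ne_of_mem_erase (Finset.mem_of_mem_erase hu)
        simp [hd', hu1, hu2]
      have hsum' : ∑ u, d' u = N - 2 := by
        have h1 : ∑ u, d' u = d' v + (d' w + ∑ u ∈ (Finset.univ.erase v).erase w, d' u) := by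
          rw [Finset.add_sum_erase _ d' hwmem, Finset.add_sum_erase _ d' (Finset.mem_univ v)]
        rw [h1, hRsum]
        have hv' : d' v = d v - 1 := by simp [hd']
        have hw' : d' w = d w - 1 := by simp [hd', hwv]
        omega
      obtain ⟨k, hk⟩ := heven
      have heven' : Even (N - 2) := by
        refine ⟨k - 1, ?_⟩; omega
      have hmax' : ∀ u, 2 * d' u ≤ N - 2 := by
        intro u
        by_cases huv : u = v
        · subst huv
          have h1 : d' u = d u - 1 := by simp [hd']
          have h2 := hmax u
          rw [h1]; omega
        · by_cases huw : u = w
          · subst huw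
            have h1 : d' u = d u - 1 := by simp [hd', huv]
            have h2 := hmax u
            rw [h1]; omega
          · have hu' : d' u = d u := by simp [hd', huv, huw]
            rw [hu']
            have humem : u ∈ (Finset.univ.erase v).erase w := by
              simp [huv, huw]
            have hle : d u ≤ ∑ x ∈ (Finset.univ.erase v).erase w, d x :=
              Finset.single_le_sum (fun i _ => Nat.zero_le (d i)) humem
            have h1 : d u ≤ d v := hvmax u (Finset.mem_univ u)
            have h2 : d u ≤ d w := hwmax u (by simp [huv])
            have h3 := hmax u
            omega
      obtain ⟨M'', hdiag, hdeg⟩ := ih (N - 2) (by omega) d' hsum' heven' hmax'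
      refine ⟨s(v, w) ::ₘ M'', ?_, ?_⟩
      · intro e he
        rcases Multiset.mem_cons.mp he with rfl | he'
        · rw [Sym2.mk_isDiag_iff]
          exact fun h => hwv h.symm
        · exact hdiag e he'
      · intro u
        rw [mdeg_cons, hdeg]
        by_cases huv : u = v
        · subst huv
          have : u ∈ s(u, w) := Sym2.mem_mk_left u w
          simp only [hd', if_pos this, if_pos rfl]
          omega
        · by_cases huw : u = w
          · subst huw
            have hm : u ∈ s(v, u) := Sym2.mem_mk_right v u
            have h1 : d' u = d u - 1 := by simp [hd', huv]
            rw [if_pos hm, h1]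
            omega
          · have : u ∉ s(v, w) := by
              rw [Sym2.mem_iff]
              push_neg
              exact ⟨huv, huw⟩
            simp [hd', this, huv, huw]

/-- If a finite multigraph (self-loops allowed) has degree sequence with
half-sum at least the maximum degree, then there is a loopless multigraph
with the same degree sequence (every self-loop can be eliminated by
degree-preserving edge switches). -/
theorem stmt1 {n : ℕ} (M : Multiset (Sym2 (Fin n)))
    (h : ∀ v, 2 * ldeg M v ≤ ∑ i, ldeg M i) :
    ∃ M' : Multiset (Sym2 (Fin n)),
      (∀ e ∈ M', ¬ e.IsDiag) ∧ ∀ v, mdeg M' v = ldeg M v := by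
  exact realize (∑ i, ldeg M i) (ldeg M) rfl
    (by rw [sum_ldeg]; exact even_two_mul _) h
end

section
/- If a graph G has two connected components C_1 and C_2 with vertex counts n_1, n_2 and edge counts m_1, m_2 satisfying m_1 + m_2 ≥ n_1 + n_2 − 1, then one of the components contains a cycle edge, and switching that cycle edge with any edge of the other component (replacing edges (a,b) in one component and (c,d) in the other by (a,c) and (b,d)) yields a graph with the same degree sequence in which the two components are merged into one connected component, without creating multi-edges. -/
open SimpleGraph

variable {V : Type*} {G : SimpleGraph V}

/-- If the endpoints of a deleted edge remain reachable, all reachability is preserved. -/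
lemma reroute {a b : V} (h : (G.deleteEdges {s(a, b)}).Reachable a b) :
    ∀ {x y : V}, G.Reachable x y → (G.deleteEdges {s(a, b)}).Reachable x y := by
  intro x y hxy
  obtain ⟨p⟩ := hxy
  induction p with
  | nil => exact Reachable.refl _
  | @cons u v w hadj p ih =>
    refine Reachable.trans ?_ ih
    by_cases he : s(u, v) = s(a, b)
    · rw [Sym2.eq_iff] at he
      rcases he with ⟨rfl, rfl⟩ | ⟨rfl, rfl⟩
      · exact h
      · exact h.symm
    · exact (SimpleGraph.deleteEdges_adj.mpr ⟨hadj, by simpa using he⟩).reachable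

/-- After deleting an edge `(c,d)`, walks split around the deleted edge. -/
lemma split_reach {c d : V} {x y : V} (p : G.Walk x y) :
    (G.deleteEdges {s(c, d)}).Reachable x y ∨
      ((G.deleteEdges {s(c, d)}).Reachable x c ∧ (G.deleteEdges {s(c, d)}).Reachable d y) ∨
      ((G.deleteEdges {s(c, d)}).Reachable x d ∧ (G.deleteEdges {s(c, d)}).Reachable c y) := by
  induction p with
  | nil => exact Or.inl (Reachable.refl _)
  | @cons u v w hadj p ih =>
    by_cases he : s(u, v) = s(c, d)
    · rw [Sym2.eq_iff] at he
      rcases he with ⟨rfl, rfl⟩ | ⟨rfl, rfl⟩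
      · rcases ih with h | ⟨h1, h2⟩ | ⟨h1, h2⟩
        · exact Or.inr (Or.inl ⟨Reachable.refl _, h⟩)
        · exact Or.inr (Or.inl ⟨Reachable.refl _, h2⟩)
        · exact Or.inl h2
      · rcases ih with h | ⟨h1, h2⟩ | ⟨h1, h2⟩
        · exact Or.inr (Or.inr ⟨Reachable.refl _, h⟩)
        · exact Or.inl h2
        · exact Or.inr (Or.inr ⟨Reachable.refl _, h2⟩)
    · have hadj' : (G.deleteEdges {s(c, d)}).Adj u v :=
        SimpleGraph.deleteEdges_adj.mpr ⟨hadj, by simpa using he⟩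
      rcases ih with h | ⟨h1, h2⟩ | ⟨h1, h2⟩
      · exact Or.inl (hadj'.reachable.trans h)
      · exact Or.inr (Or.inl ⟨hadj'.reachable.trans h1, h2⟩)
      · exact Or.inr (Or.inr ⟨hadj'.reachable.trans h1, h2⟩)

/-- Transfer reachability inside a component through a local adjacency implication. -/
lemma reachable_transfer {G' : SimpleGraph V} {s : Set (Sym2 V)} (K : G.ConnectedComponent)
    (hAdj : ∀ u v, u ∈ K.supp → v ∈ K.supp → (G.deleteEdges s).Adj u v → G'.Adj u v)
    {x y : V} (p : (G.deleteEdges s).Walk x y) (hx : x ∈ K.supp) : G'.Reachable x y := by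
  induction p with
  | nil => exact Reachable.refl _
  | @cons u v w hadj p ih =>
    have hGuv : G.Adj u v := (SimpleGraph.deleteEdges_adj.mp hadj).1
    have hv : v ∈ K.supp := by
      rw [ConnectedComponent.mem_supp_iff] at hx ⊢
      rw [← ConnectedComponent.connectedComponentMk_eq_of_adj hGuv]
      exact hx
    exact ((hAdj u v hx hv hadj).reachable).trans (ih hv)

lemma induce_reach {s : Set V} :
    ∀ {x y : V} (p : G.Walk x y) (hp : ∀ v ∈ p.support, v ∈ s)
      (hx : x ∈ s) (hy : y ∈ s), (G.induce s).Reachable ⟨x, hx⟩ ⟨y, hy⟩ := by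
  intro x y p
  induction p with
  | nil => intro _ _ _; exact Reachable.refl _
  | @cons u v w hadj p ih =>
    intro hp hx hy
    have hv : v ∈ s := hp v (by simp)
    have h1 : (G.induce s).Adj ⟨u, hx⟩ ⟨v, hv⟩ := hadj
    exact h1.reachable.trans (ih (fun z hz => hp z (by simp [hz])) hv hy)

/-- If every internal edge of a component is a bridge, the component is a tree,
so internal edge count + 1 = vertex count. -/
lemma bridge_count {n : ℕ} {G : SimpleGraph (Fin n)} (C : G.ConnectedComponent)
    (hb : ∀ a b : Fin n, G.Adj a b → a ∈ C.supp → b ∈ C.supp →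
      ¬(G.deleteEdges {s(a, b)}).Reachable a b) :
    {e ∈ G.edgeSet | ∀ v ∈ e, v ∈ C.supp}.ncard + 1 = C.supp.ncard := by
  classical
  set s := C.supp with hs
  set H := G.induce s with hH
  have hconn : H.Connected := by
    obtain ⟨v, hv⟩ := C.exists_rep
    have hvs : v ∈ s := hv
    rw [connected_iff]
    refine ⟨?_, ⟨⟨v, hvs⟩⟩⟩
    rintro ⟨x, hx⟩ ⟨y, hy⟩
    have hre : G.Reachable x y := by
      rw [hs, ConnectedComponent.mem_supp_iff] at hx hy
      exact ConnectedComponent.exact (hx.trans hy.symm)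
    obtain ⟨p⟩ := hre
    refine induce_reach p ?_ hx hy
    intro u hu
    obtain ⟨q, r, _⟩ := SimpleGraph.Walk.mem_support_iff_exists_append.mp hu
    rw [hs, ConnectedComponent.mem_supp_iff] at hx ⊢
    rw [← hx]
    exact (ConnectedComponent.sound ⟨q⟩).symm
  have hacyc : H.IsAcyclic := by
    rw [isAcyclic_iff_forall_adj_isBridge]
    intro u v huv
    have hGuv : G.Adj u.val v.val := huv
    rw [SimpleGraph.isBridge_iff]
    intro hr
    have hmap : ∀ x y : ↥s, (H.deleteEdges {s(u, v)}).Adj x y →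
        (G.deleteEdges {s(u.val, v.val)}).Adj x.val y.val := by
      intro x y hxy
      rw [SimpleGraph.deleteEdges_adj] at hxy ⊢
      refine ⟨hxy.1, ?_⟩
      intro hcontra
      apply hxy.2
      simp only [Set.mem_singleton_iff] at hcontra ⊢
      have h3 : Sym2.map Subtype.val s(x, y) = Sym2.map Subtype.val s(u, v) := by
        simpa using hcontra
      exact Sym2.map.injective Subtype.val_injective h3
    have hr' : (G.deleteEdges {s(u.val, v.val)}).Reachable u.val v.val :=
      hr.map ⟨Subtype.val, fun h => hmap _ _ h⟩
    exact hb u.val v.val hGuv u.property v.property hr'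
  have htree : H.IsTree := ⟨hconn, hacyc⟩
  haveI : Fintype ↥s := Fintype.ofFinite _
  haveI : Fintype H.edgeSet := Fintype.ofFinite _
  have hcard := htree.card_edgeFinset
  have himg : {e ∈ G.edgeSet | ∀ v ∈ e, v ∈ s} = Sym2.map Subtype.val '' H.edgeSet := by
    ext e
    induction e using Sym2.ind with
    | _ x y =>
      constructor
      · rintro ⟨he, hm⟩
        have hx : x ∈ s := hm x (Sym2.mem_mk_left x y)
        have hy : y ∈ s := hm y (Sym2.mem_mk_right x y)
        refine ⟨s(⟨x, hx⟩, ⟨y, hy⟩), ?_, by simp⟩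
        exact H.mem_edgeSet.mpr (G.mem_edgeSet.mp he)
      · rintro ⟨e', he', hmap⟩
        induction e' using Sym2.ind with
        | _ u v =>
          have huv : H.Adj u v := H.mem_edgeSet.mp he'
          have : s(u.val, v.val) = s(x, y) := by simpa using hmap
          rw [← this]
          refine ⟨G.mem_edgeSet.mpr huv, ?_⟩
          intro w hw
          rw [Sym2.mem_iff] at hw
          rcases hw with rfl | rfl
          · exact u.property
          · exact v.property
  have h1 : {e ∈ G.edgeSet | ∀ v ∈ e, v ∈ s}.ncard = H.edgeFinset.card := by
    rw [himg, Set.ncard_image_of_injective _ (Sym2.map.injective Subtype.val_injective),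
      Set.ncard_eq_toFinset_card']
    apply congrArg Finset.card
    ext e
    simp
  have h2 : s.ncard = Fintype.card ↥s := by
    rw [Set.ncard_eq_toFinset_card', Set.toFinset_card]
  rw [h1, h2, hcard]

set_option maxHeartbeats 2000000 in
lemma switch_aux {n : ℕ} (G : SimpleGraph (Fin n)) (D E : G.ConnectedComponent) (hne : D ≠ E)
    (a b : Fin n) (hab : G.Adj a b) (ha : a ∈ D.supp) (hb : b ∈ D.supp)
    (hcyc : (G.deleteEdges {s(a, b)}).Reachable a b) :
    ∃ a' b' : Fin n, G.Adj a' b' ∧ a' ∈ D.supp ∧ b' ∈ D.supp ∧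
      (∀ x ∈ D.supp, ∀ y ∈ D.supp, (G.deleteEdges {s(a', b')}).Reachable x y) ∧
      ∀ c d : Fin n, G.Adj c d → c ∈ E.supp → d ∈ E.supp →
        s(a', c) ∉ G.edgeSet ∧ s(b', d) ∉ G.edgeSet ∧ a' ≠ c ∧ b' ≠ d ∧
        (let G' := SimpleGraph.fromEdgeSet
            ((G.edgeSet \ {s(a', b'), s(c, d)}) ∪ {s(a', c), s(b', d)})
         (∀ v, (G'.neighborSet v).ncard = (G.neighborSet v).ncard) ∧
           ∀ x, (x ∈ D.supp ∨ x ∈ E.supp) → ∀ y, (y ∈ D.supp ∨ y ∈ E.supp) →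
             G'.Reachable x y) := by
  classical
  have hreachD : ∀ x ∈ D.supp, ∀ y ∈ D.supp, G.Reachable x y := by
    intro x hx y hy
    rw [ConnectedComponent.mem_supp_iff] at hx hy
    exact ConnectedComponent.exact (hx.trans hy.symm)
  have hreachE : ∀ x ∈ E.supp, ∀ y ∈ E.supp, G.Reachable x y := by
    intro x hx y hy
    rw [ConnectedComponent.mem_supp_iff] at hx hy
    exact ConnectedComponent.exact (hx.trans hy.symm)
  have hnadj : ∀ u ∈ D.supp, ∀ w ∈ E.supp, ¬G.Adj u w := by
    intro u hu w hw h
    rw [ConnectedComponent.mem_supp_iff] at hu hw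
    exact hne (hu ▸ hw ▸ ConnectedComponent.connectedComponentMk_eq_of_adj h)
  have hcross : ∀ u ∈ D.supp, ∀ w ∈ E.supp, u ≠ w := by
    intro u hu w hw h
    subst h
    rw [ConnectedComponent.mem_supp_iff] at hu hw
    exact hne (hu ▸ hw)
  refine ⟨a, b, hab, ha, hb, fun x hx y hy => reroute hcyc (hreachD x hx y hy), ?_⟩
  intro c d hcd hc hd
  have hnab : a ≠ b := hab.ne
  have hncd : c ≠ d := hcd.ne
  have hnac : a ≠ c := hcross a ha c hc
  have hnad : a ≠ d := hcross a ha d hd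
  have hnbc : b ≠ c := hcross b hb c hc
  have hnbd : b ≠ d := hcross b hb d hd
  have hacE : s(a, c) ∉ G.edgeSet := fun h => hnadj a ha c hc (G.mem_edgeSet.mp h)
  have hbdE : s(b, d) ∉ G.edgeSet := fun h => hnadj b hb d hd (G.mem_edgeSet.mp h)
  refine ⟨hacE, hbdE, hnac, hnbd, ?_, ?_⟩
  · -- degrees
    intro v
    set S : Set (Sym2 (Fin n)) :=
      (G.edgeSet \ {s(a, b), s(c, d)}) ∪ {s(a, c), s(b, d)} with hS
    have hnGac : ¬G.Adj a c := fun h => hacE (G.mem_edgeSet.mpr h)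
    have hnGbd : ¬G.Adj b d := fun h => hbdE (G.mem_edgeSet.mpr h)
    by_cases hva : v = a
    · subst hva
      have hN : (SimpleGraph.fromEdgeSet S).neighborSet v = insert c (G.neighborSet v \ {b}) := by
        ext w
        have haw : G.Adj v w → ¬v = w := Adj.ne
        simp only [SimpleGraph.mem_neighborSet, SimpleGraph.fromEdgeSet_adj, hS,
          Set.mem_union, Set.mem_diff, Set.mem_insert_iff, Set.mem_singleton_iff,
          Sym2.eq_iff, SimpleGraph.mem_edgeSet, Set.mem_setOf_eq, eq_self_iff_true,
          true_and, and_true, hnab, hncd, hnac, hnad, hnbc, hnbd, Ne.symm hnab,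
          Ne.symm hncd, Ne.symm hnac, Ne.symm hnad, Ne.symm hnbc, Ne.symm hnbd,
          false_and, and_false, false_or, or_false]
        have h1 : w = c → ¬v = w := fun h => h ▸ hnac
        have h2 : w = b → ¬v = w := fun h => h ▸ hnab
        tauto
      rw [hN, Set.ncard_insert_of_notMem (by simp [hnGac]),
        Set.ncard_diff_singleton_of_mem (show b ∈ G.neighborSet v from hab)]
      have hpos : 0 < (G.neighborSet v).ncard :=
        (Set.ncard_pos (Set.toFinite _)).mpr ⟨b, hab⟩
      omega
    · by_cases hvb : v = b
      · subst hvb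
        have hN : (SimpleGraph.fromEdgeSet S).neighborSet v
            = insert d (G.neighborSet v \ {a}) := by
          ext w
          have haw : G.Adj v w → ¬v = w := Adj.ne
          simp only [SimpleGraph.mem_neighborSet, SimpleGraph.fromEdgeSet_adj, hS,
            Set.mem_union, Set.mem_diff, Set.mem_insert_iff, Set.mem_singleton_iff,
            Sym2.eq_iff, SimpleGraph.mem_edgeSet, Set.mem_setOf_eq, eq_self_iff_true,
            true_and, and_true, hnab, hncd, hnac, hnad, hnbc, hnbd, Ne.symm hnab,
            Ne.symm hncd, Ne.symm hnac, Ne.symm hnad, Ne.symm hnbc, Ne.symm hnbd,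
            false_and, and_false, false_or, or_false]
          have h1 : w = d → ¬v = w := fun h => h ▸ hnbd
          have h2 : w = a → ¬v = w := fun h => h ▸ hnab.symm
          tauto
        rw [hN, Set.ncard_insert_of_notMem (by simp [hnGbd]),
          Set.ncard_diff_singleton_of_mem (show a ∈ G.neighborSet v from hab.symm)]
        have hpos : 0 < (G.neighborSet v).ncard :=
          (Set.ncard_pos (Set.toFinite _)).mpr ⟨a, hab.symm⟩
        omega
      · by_cases hvc : v = c
        · subst hvc
          have hN : (SimpleGraph.fromEdgeSet S).neighborSet v
              = insert a (G.neighborSet v \ {d}) := by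
            ext w
            have haw : G.Adj v w → ¬v = w := Adj.ne
            simp only [SimpleGraph.mem_neighborSet, SimpleGraph.fromEdgeSet_adj, hS,
              Set.mem_union, Set.mem_diff, Set.mem_insert_iff, Set.mem_singleton_iff,
              Sym2.eq_iff, SimpleGraph.mem_edgeSet, Set.mem_setOf_eq, eq_self_iff_true,
              true_and, and_true]
            have h1 : w = a → ¬v = w := fun h => h ▸ hnac.symm
            have h2 : w = d → ¬v = w := fun h => h ▸ hncd
            have h3 : ¬v = a := hnac.symm
            have h4 : ¬v = b := hnbc.symm
            tauto
          rw [hN, Set.ncard_insert_of_notMem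
              (fun hmem => hnGac (Set.mem_of_mem_diff hmem).symm),
            Set.ncard_diff_singleton_of_mem (show d ∈ G.neighborSet v from hcd)]
          have hpos : 0 < (G.neighborSet v).ncard :=
            (Set.ncard_pos (Set.toFinite _)).mpr ⟨d, hcd⟩
          omega
        · by_cases hvd : v = d
          · subst hvd
            have hN : (SimpleGraph.fromEdgeSet S).neighborSet v
                = insert b (G.neighborSet v \ {c}) := by
              ext w
              have haw : G.Adj v w → ¬v = w := Adj.ne
              simp only [SimpleGraph.mem_neighborSet, SimpleGraph.fromEdgeSet_adj, hS,
                Set.mem_union, Set.mem_diff, Set.mem_insert_iff, Set.mem_singleton_iff,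
                Sym2.eq_iff, SimpleGraph.mem_edgeSet, Set.mem_setOf_eq, eq_self_iff_true,
                true_and, and_true, hnab, hncd, hnac, hnad, hnbc, hnbd, Ne.symm hnab,
                Ne.symm hncd, Ne.symm hnac, Ne.symm hnad, Ne.symm hnbc, Ne.symm hnbd,
                false_and, and_false, false_or, or_false]
              have h1 : w = b → ¬v = w := fun h => h ▸ hnbd.symm
              have h2 : w = c → ¬v = w := fun h => h ▸ hncd.symm
              have h3 : ¬v = a := hnad.symm
              have h4 : ¬v = b := hnbd.symm
              tauto
            rw [hN, Set.ncard_insert_of_notMem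
                (fun hmem => hnGbd (Set.mem_of_mem_diff hmem).symm),
              Set.ncard_diff_singleton_of_mem (show c ∈ G.neighborSet v from hcd.symm)]
            have hpos : 0 < (G.neighborSet v).ncard :=
              (Set.ncard_pos (Set.toFinite _)).mpr ⟨c, hcd.symm⟩
            omega
          · have hN : (SimpleGraph.fromEdgeSet S).neighborSet v = G.neighborSet v := by
              ext w
              have haw : G.Adj v w → ¬v = w := Adj.ne
              simp only [SimpleGraph.mem_neighborSet, SimpleGraph.fromEdgeSet_adj, hS,
                Set.mem_union, Set.mem_diff, Set.mem_insert_iff, Set.mem_singleton_iff,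
                Sym2.eq_iff, SimpleGraph.mem_edgeSet, Set.mem_setOf_eq, eq_self_iff_true,
                true_and, and_true, hva, hvb, hvc, hvd, false_and, false_or, or_false]
              tauto
            rw [hN]
  · -- connectivity
    have hadjD : ∀ u v, u ∈ D.supp → v ∈ D.supp → (G.deleteEdges {s(a, b)}).Adj u v →
        (SimpleGraph.fromEdgeSet
          ((G.edgeSet \ {s(a, b), s(c, d)}) ∪ {s(a, c), s(b, d)})).Adj u v := by
      intro u v hu hv huv
      rw [SimpleGraph.deleteEdges_adj] at huv
      rw [SimpleGraph.fromEdgeSet_adj]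
      refine ⟨Or.inl ⟨G.mem_edgeSet.mpr huv.1, ?_⟩, huv.1.ne⟩
      simp only [Set.mem_insert_iff, Set.mem_singleton_iff, not_or]
      refine ⟨by simpa using huv.2, ?_⟩
      rw [Sym2.eq_iff]
      rintro (⟨rfl, rfl⟩ | ⟨rfl, rfl⟩)
      · exact hcross u hu u hc rfl
      · exact hcross u hu u hd rfl
    have hadjE : ∀ u v, u ∈ E.supp → v ∈ E.supp → (G.deleteEdges {s(c, d)}).Adj u v →
        (SimpleGraph.fromEdgeSet
          ((G.edgeSet \ {s(a, b), s(c, d)}) ∪ {s(a, c), s(b, d)})).Adj u v := by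
      intro u v hu hv huv
      rw [SimpleGraph.deleteEdges_adj] at huv
      rw [SimpleGraph.fromEdgeSet_adj]
      refine ⟨Or.inl ⟨G.mem_edgeSet.mpr huv.1, ?_⟩, huv.1.ne⟩
      simp only [Set.mem_insert_iff, Set.mem_singleton_iff, not_or]
      refine ⟨?_, by simpa using huv.2⟩
      rw [Sym2.eq_iff]
      rintro (⟨rfl, rfl⟩ | ⟨rfl, rfl⟩)
      · exact hcross u ha u hu rfl
      · exact hcross u hb u hu rfl
    have hGac' : (SimpleGraph.fromEdgeSet
        ((G.edgeSet \ {s(a, b), s(c, d)}) ∪ {s(a, c), s(b, d)})).Adj a c := by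
      rw [SimpleGraph.fromEdgeSet_adj]
      exact ⟨Or.inr (by simp), hnac⟩
    have hGbd' : (SimpleGraph.fromEdgeSet
        ((G.edgeSet \ {s(a, b), s(c, d)}) ∪ {s(a, c), s(b, d)})).Adj b d := by
      rw [SimpleGraph.fromEdgeSet_adj]
      exact ⟨Or.inr (by simp), hnbd⟩
    have hDa : ∀ x ∈ D.supp, (SimpleGraph.fromEdgeSet
        ((G.edgeSet \ {s(a, b), s(c, d)}) ∪ {s(a, c), s(b, d)})).Reachable x a := by
      intro x hx
      obtain ⟨p⟩ := reroute hcyc (hreachD x hx a ha)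
      exact reachable_transfer D hadjD p hx
    have hEa : ∀ x ∈ E.supp, (SimpleGraph.fromEdgeSet
        ((G.edgeSet \ {s(a, b), s(c, d)}) ∪ {s(a, c), s(b, d)})).Reachable x a := by
      intro x hx
      obtain ⟨p⟩ := hreachE x hx c hc
      rcases split_reach (d := d) p with h | ⟨h1, -⟩ | ⟨h1, -⟩
      · obtain ⟨q⟩ := h
        exact (reachable_transfer E hadjE q hx).trans hGac'.reachable.symm
      · obtain ⟨q⟩ := h1
        exact (reachable_transfer E hadjE q hx).trans hGac'.reachable.symm
      · obtain ⟨q⟩ := h1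
        exact ((reachable_transfer E hadjE q hx).trans hGbd'.reachable.symm).trans
          (hDa b hb)
    intro x hx y hy
    have hA : ∀ z, (z ∈ D.supp ∨ z ∈ E.supp) → (SimpleGraph.fromEdgeSet
        ((G.edgeSet \ {s(a, b), s(c, d)}) ∪ {s(a, c), s(b, d)})).Reachable z a :=
      fun z hz => hz.elim (hDa z) (hEa z)
    exact (hA x hx).trans (hA y hy).symm


/-- If a graph `G` has two connected components `C1`, `C2` with vertex counts
`n1, n2` and (internal) edge counts `m1, m2` satisfying `m1 + m2 ≥ n1 + n2 - 1`,
then one of the two components contains a cycle edge `(a,b)` (an edge whose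
removal keeps that component connected), and switching that cycle edge with any
edge `(c,d)` of the other component — replacing `(a,b)`,`(c,d)` by `(a,c)`,`(b,d)`
— yields a graph with the same degree sequence in which the two components are
merged into one connected component, without creating multi-edges or loops. -/
theorem stmt4 {n : ℕ} (G : SimpleGraph (Fin n))
    (C1 C2 : G.ConnectedComponent) (hne : C1 ≠ C2)
    (hcount :
      C1.supp.ncard + C2.supp.ncard - 1 ≤
        {e ∈ G.edgeSet | ∀ v ∈ e, v ∈ C1.supp}.ncard +
          {e ∈ G.edgeSet | ∀ v ∈ e, v ∈ C2.supp}.ncard) :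
    ∃ D E : G.ConnectedComponent, ({D, E} : Set G.ConnectedComponent) = {C1, C2} ∧
      ∃ a b : Fin n, G.Adj a b ∧ a ∈ D.supp ∧ b ∈ D.supp ∧
        (∀ x ∈ D.supp, ∀ y ∈ D.supp, (G.deleteEdges {s(a, b)}).Reachable x y) ∧
        ∀ c d : Fin n, G.Adj c d → c ∈ E.supp → d ∈ E.supp →
          s(a, c) ∉ G.edgeSet ∧ s(b, d) ∉ G.edgeSet ∧ a ≠ c ∧ b ≠ d ∧
          (let G' := SimpleGraph.fromEdgeSet
              ((G.edgeSet \ {s(a, b), s(c, d)}) ∪ {s(a, c), s(b, d)})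
           (∀ v, (G'.neighborSet v).ncard = (G.neighborSet v).ncard) ∧
             ∀ x ∈ C1.supp ∪ C2.supp, ∀ y ∈ C1.supp ∪ C2.supp, G'.Reachable x y) := by
  classical
  have key : (∃ a b, G.Adj a b ∧ a ∈ C1.supp ∧ b ∈ C1.supp ∧
        (G.deleteEdges {s(a, b)}).Reachable a b) ∨
      (∃ a b, G.Adj a b ∧ a ∈ C2.supp ∧ b ∈ C2.supp ∧
        (G.deleteEdges {s(a, b)}).Reachable a b) := by
    by_contra hcon
    push_neg at hcon
    obtain ⟨h1, h2⟩ := hcon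
    have hb1 := bridge_count C1 (fun a b hadj ha hb => h1 a b hadj ha hb)
    have hb2 := bridge_count C2 (fun a b hadj ha hb => h2 a b hadj ha hb)
    omega
  rcases key with ⟨a, b, hab, ha, hb, hcyc⟩ | ⟨a, b, hab, ha, hb, hcyc⟩
  · obtain ⟨a', b', h1, h2, h3, h4, h5⟩ := switch_aux G C1 C2 hne a b hab ha hb hcyc
    refine ⟨C1, C2, rfl, a', b', h1, h2, h3, h4, ?_⟩
    intro c d hcd hc hd
    obtain ⟨k1, k2, k3, k4, k56⟩ := h5 c d hcd hc hd
    obtain ⟨k5, k6⟩ := k56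
    refine ⟨k1, k2, k3, k4, k5, ?_⟩
    intro x hx y hy
    exact k6 x ((Set.mem_union x _ _).mp hx) y ((Set.mem_union y _ _).mp hy)
  · obtain ⟨a', b', h1, h2, h3, h4, h5⟩ := switch_aux G C2 C1 hne.symm a b hab ha hb hcyc
    refine ⟨C2, C1, Set.pair_comm C2 C1, a', b', h1, h2, h3, h4, ?_⟩
    intro c d hcd hc hd
    obtain ⟨k1, k2, k3, k4, k56⟩ := h5 c d hcd hc hd
    obtain ⟨k5, k6⟩ := k56
    refine ⟨k1, k2, k3, k4, k5, ?_⟩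
    intro x hx y hy
    exact k6 x ((Set.mem_union x _ _).mp hx).symm y ((Set.mem_union y _ _).mp hy).symm
end

section
/- A graphical degree sequence has a connected simple graph realization if and only if it has a connected realization as a loopless multigraph; equivalently, every potentially connected graphical degree sequence has a connected simple realization. -/
set_option linter.unusedSectionVars false
set_option maxHeartbeats 1000000

/-- Connectedness of a multigraph given as a multiset of edges. -/
def mConnected {n : ℕ} (M : Multiset (Sym2 (Fin n))) : Prop :=
  (SimpleGraph.fromRel (fun a b => s(a, b) ∈ M)).Connected

/-- A degree sequence is graphical if some simple graph realizes it. -/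
def Graphical {m : ℕ} (d : Fin m → ℕ) : Prop :=
  ∃ G : SimpleGraph (Fin m), ∀ v, (G.neighborSet v).ncard = d v

open SimpleGraph

section Aux

variable {V : Type*} [Fintype V] [DecidableEq V]

lemma reach_transfer {G G' : SimpleGraph V} (h : ∀ a b : V, G.Adj a b → G'.Reachable a b)
    {a b : V} (hr : G.Reachable a b) : G'.Reachable a b := by
  obtain ⟨p⟩ := hr
  induction p with
  | nil => exact Reachable.refl _
  | cons ha _ ih => exact (h _ _ ha).trans ih

lemma acyclic_sup_edge {G : SimpleGraph V} (hG : G.IsAcyclic) {a b : V} (hab : a ≠ b)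
    (hr : ¬G.Reachable a b) : (G ⊔ edge a b).IsAcyclic := by
  intro w c hc
  have hadj : (G ⊔ edge a b).Adj a b := Or.inr ((edge_adj a b a b).2 ⟨Or.inl ⟨rfl, rfl⟩, hab⟩)
  have hbridge : (G ⊔ edge a b).IsBridge s(a, b) := by
    rw [isBridge_iff]
    refine fun hre => hr (hre.mono ?_)
    intro p q hpq
    obtain ⟨hpq1, hpq2⟩ := hpq
    rcases hpq1 with h' | h'
    · exact h'
    · exfalso
      apply hpq2
      rw [fromEdgeSet_adj]
      rw [edge_adj] at h'
      refine ⟨?_, h'.2⟩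
      rcases h'.1 with ⟨rfl, rfl⟩ | ⟨rfl, rfl⟩
      · rfl
      · exact Sym2.eq_swap
  have hnotmem := (isBridge_iff_forall_cycle_notMem hadj).mp hbridge c hc
  have hsub : ∀ e ∈ c.edges, e ∈ G.edgeSet := by
    intro e he
    have h2 : e ∈ (G ⊔ edge a b).edgeSet := c.edges_subset_edgeSet he
    rw [edgeSet_sup, edge_edgeSet_of_ne hab] at h2
    rcases h2 with h2 | h2
    · exact h2
    · exact absurd (h2 ▸ he) hnotmem
  exact hG (c.transfer G hsub) (hc.transfer hsub)

lemma edgeSet_ncard_sup_edge {G : SimpleGraph V} {a b : V} (hab : a ≠ b) (hn : ¬G.Adj a b) :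
    (G ⊔ edge a b).edgeSet.ncard = G.edgeSet.ncard + 1 := by
  rw [edgeSet_sup, edge_edgeSet_of_ne hab, Set.union_singleton,
    Set.ncard_insert_of_notMem (by rwa [mem_edgeSet]) (Set.toFinite _)]

lemma tree_ncard {G : SimpleGraph V} (hG : G.IsTree) :
    G.edgeSet.ncard + 1 = Fintype.card V := by
  classical
  letI : Fintype G.edgeSet := (Set.toFinite _).fintype
  rw [Set.ncard_eq_toFinset_card' G.edgeSet]
  exact hG.card_edgeFinset

lemma acyclic_ncard [Nonempty V] (G : SimpleGraph V) (hG : G.IsAcyclic) :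
    G.edgeSet.ncard + 1 ≤ Fintype.card V := by
  classical
  suffices h : ∀ k (G : SimpleGraph V), Fintype.card (Sym2 V) - G.edgeSet.ncard = k →
      G.IsAcyclic → G.edgeSet.ncard + 1 ≤ Fintype.card V from h _ G rfl hG
  intro k
  induction k using Nat.strong_induction_on with
  | _ k IH =>
    intro G hk hac
    by_cases hc : G.Connected
    · exact (tree_ncard ⟨hc, hac⟩).le
    · rw [connected_iff] at hc
      push_neg at hc
      obtain ⟨a, b, hr⟩ : ∃ a b : V, ¬G.Reachable a b := by
        by_cases hp : G.Preconnected
        · exact absurd (hc hp) (not_isEmpty_of_nonempty V)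
        · unfold SimpleGraph.Preconnected at hp; push_neg at hp; exact hp
      have hab : a ≠ b := by rintro rfl; exact hr (Reachable.refl _)
      have hadj : ¬G.Adj a b := fun h => hr h.reachable
      have hcard : (G ⊔ edge a b).edgeSet.ncard = G.edgeSet.ncard + 1 :=
        edgeSet_ncard_sup_edge hab hadj
      have hle : (G ⊔ edge a b).edgeSet.ncard ≤ Fintype.card (Sym2 V) := by
        have h9 : (G ⊔ edge a b).edgeSet.ncard ≤ (Set.univ : Set (Sym2 V)).ncard :=
          Set.ncard_le_ncard (Set.subset_univ _) (Set.toFinite _)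
        rwa [Set.ncard_univ, Nat.card_eq_fintype_card] at h9
      have hlt : Fintype.card (Sym2 V) - (G ⊔ edge a b).edgeSet.ncard < k := by omega
      have := IH _ hlt (G ⊔ edge a b) rfl (acyclic_sup_edge hac hab hr)
      omega

lemma connected_ncard_le (G : SimpleGraph V) (hc : G.Connected) :
    Fintype.card V ≤ G.edgeSet.ncard + 1 := by
  classical
  suffices h : ∀ k (G : SimpleGraph V), G.edgeSet.ncard = k →
      G.Connected → Fintype.card V ≤ G.edgeSet.ncard + 1 from h _ G rfl hc
  intro k
  induction k using Nat.strong_induction_on with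
  | _ k IH =>
    intro G hk hc
    by_cases hac : G.IsAcyclic
    · exact (tree_ncard ⟨hc, hac⟩).ge
    · have : ∃ x y : V, G.Adj x y ∧ ¬G.IsBridge s(x, y) := by
        by_contra h
        push_neg at h
        exact hac (isAcyclic_iff_forall_adj_isBridge.2 fun v w hvw => h v w hvw)
      obtain ⟨x, y, hxy, hbr⟩ := this
      have hreach : (G \ fromEdgeSet {s(x, y)}).Reachable x y := by
        rw [isBridge_iff] at hbr
        push_neg at hbr
        exact hbr
      set G' := G \ fromEdgeSet {s(x, y)} with hG'
      have hGadj : ∀ a b : V, G.Adj a b → G'.Reachable a b := by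
        intro a b hab
        by_cases he : s(a, b) = s(x, y)
        · rw [Sym2.eq_iff] at he
          rcases he with ⟨rfl, rfl⟩ | ⟨rfl, rfl⟩
          · exact hreach
          · exact hreach.symm
        · exact Adj.reachable ⟨hab, fun hfe => he (by
            rw [fromEdgeSet_adj] at hfe
            exact hfe.1)⟩
      have hc' : G'.Connected := by
        rw [connected_iff]
        exact ⟨fun a b => reach_transfer hGadj (hc.preconnected a b), hc.nonempty⟩
      have hcard : G'.edgeSet.ncard + 1 = G.edgeSet.ncard := by
        rw [hG', edgeSet_sdiff, edgeSet_fromEdgeSet]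
        have : ({s(x, y)} : Set (Sym2 V)) \ {e | e.IsDiag} = {s(x, y)} := by
          ext e
          simp only [Set.mem_diff, Set.mem_singleton_iff, Set.mem_setOf_eq,
            and_iff_left_iff_imp]
          rintro rfl
          simp [Sym2.isDiag_iff_proj_eq, hxy.ne]
        rw [show Sym2.diagSet = {e : Sym2 V | e.IsDiag} from rfl, this]
        exact Set.ncard_diff_singleton_add_one (by rwa [mem_edgeSet]) (Set.toFinite _)
      have hlt : G'.edgeSet.ncard < k := by omega
      have := IH _ hlt G' rfl hc'
      omega

lemma edge_comm' (s t : V) : edge s t = edge t s := by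
  rw [edge, edge, Sym2.eq_swap]

lemma swap_nbr_x {G : SimpleGraph V} {x y u v : V} (hxy : G.Adj x y) (hxu : ¬G.Adj x u)
    (hxune : x ≠ u) (hxv : x ≠ v) :
    (G.deleteEdges {s(x, y), s(u, v)} ⊔ edge x u ⊔ edge y v).neighborSet x
      = insert u (G.neighborSet x \ {y}) := by
  have hxy' : x ≠ y := hxy.ne
  ext z
  simp only [mem_neighborSet, sup_adj, deleteEdges_adj, Set.mem_insert_iff, Set.mem_diff,
    Set.mem_singleton_iff, edge_adj, Sym2.eq_iff]
  constructor
  · rintro ((⟨hz, hne⟩ | ⟨(⟨-, rfl⟩ | ⟨hh, -⟩), hne⟩) | ⟨(⟨hh, -⟩ | ⟨hh, -⟩), -⟩)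
    · exact Or.inr ⟨hz, fun hzy => hne (Or.inl (Or.inl ⟨trivial, hzy⟩))⟩
    · exact Or.inl rfl
    · exact absurd hh hxune
    · exact absurd hh hxy'
    · exact absurd hh hxv
  · rintro (rfl | ⟨hz, hzy⟩)
    · exact Or.inl (Or.inr ⟨Or.inl ⟨trivial, rfl⟩, hxune⟩)
    · refine Or.inl (Or.inl ⟨hz, ?_⟩)
      rintro ((⟨-, rfl⟩ | ⟨hh, -⟩) | (⟨hh, -⟩ | ⟨hh, -⟩))
      · exact hzy rfl
      · exact hxy' hh
      · exact hxune hh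
      · exact hxv hh

lemma swap_deg_x {G : SimpleGraph V} {x y u v : V} (hxy : G.Adj x y) (hxu : ¬G.Adj x u)
    (hxune : x ≠ u) (hxv : x ≠ v) :
    ((G.deleteEdges {s(x, y), s(u, v)} ⊔ edge x u ⊔ edge y v).neighborSet x).ncard
      = (G.neighborSet x).ncard := by
  rw [swap_nbr_x hxy hxu hxune hxv]
  have h1 : u ∉ G.neighborSet x \ {y} := fun h => hxu h.1
  rw [Set.ncard_insert_of_notMem h1 (Set.toFinite _)]
  exact Set.ncard_diff_singleton_add_one hxy (Set.toFinite _)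

lemma swap_deg {G : SimpleGraph V} {x y u v : V}
    (hxy : G.Adj x y) (huv : G.Adj u v) (hxu : ¬G.Adj x u) (hyv : ¬G.Adj y v)
    (hxune : x ≠ u) (hxv : x ≠ v) (hyu : y ≠ u) (hyvne : y ≠ v) (w : V) :
    ((G.deleteEdges {s(x, y), s(u, v)} ⊔ edge x u ⊔ edge y v).neighborSet w).ncard
      = (G.neighborSet w).ncard := by
  have hpair1 : ({s(x, y), s(u, v)} : Set (Sym2 V)) = {s(y, x), s(v, u)} := by
    rw [show s(x, y) = s(y, x) from Sym2.eq_swap, show s(u, v) = s(v, u) from Sym2.eq_swap]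
  have hpair2 : ({s(x, y), s(u, v)} : Set (Sym2 V)) = {s(u, v), s(x, y)} := Set.pair_comm _ _
  have hpair3 : ({s(x, y), s(u, v)} : Set (Sym2 V)) = {s(v, u), s(y, x)} := by
    rw [hpair1, Set.pair_comm]
  rcases eq_or_ne w x with rfl | hwx
  · exact swap_deg_x hxy hxu hxune hxv
  rcases eq_or_ne w y with rfl | hwy
  · rw [show G.deleteEdges {s(x, w), s(u, v)} ⊔ edge x u ⊔ edge w v
        = G.deleteEdges {s(w, x), s(v, u)} ⊔ edge w v ⊔ edge x u from by
      rw [hpair1, sup_right_comm]]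
    exact swap_deg_x hxy.symm hyv hyvne hyu
  rcases eq_or_ne w u with rfl | hwu
  · rw [show G.deleteEdges {s(x, y), s(w, v)} ⊔ edge x w ⊔ edge y v
        = G.deleteEdges {s(w, v), s(x, y)} ⊔ edge w x ⊔ edge v y from by
      rw [hpair2, edge_comm' x w, edge_comm' y v]]
    exact swap_deg_x huv (fun h => hxu h.symm) (Ne.symm hxune) (Ne.symm hyu)
  rcases eq_or_ne w v with rfl | hwv
  · rw [show G.deleteEdges {s(x, y), s(u, w)} ⊔ edge x u ⊔ edge y w
        = G.deleteEdges {s(w, u), s(y, x)} ⊔ edge w y ⊔ edge u x from by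
      rw [hpair3, sup_right_comm, edge_comm' y w, edge_comm' x u]]
    exact swap_deg_x huv.symm (fun h => hyv h.symm) (Ne.symm hyvne) (Ne.symm hxv)
  · congr 1
    ext z
    simp only [mem_neighborSet, sup_adj, deleteEdges_adj, edge_adj, Set.mem_insert_iff,
      Set.mem_singleton_iff, Sym2.eq_iff]
    constructor
    · rintro ((⟨hz, -⟩ | ⟨(⟨hh, -⟩ | ⟨hh, -⟩), -⟩) | ⟨(⟨hh, -⟩ | ⟨hh, -⟩), -⟩)
      · exact hz
      · exact absurd hh hwx
      · exact absurd hh hwu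
      · exact absurd hh hwy
      · exact absurd hh hwv
    · intro hz
      refine Or.inl (Or.inl ⟨hz, ?_⟩)
      rintro ((⟨hh, -⟩ | ⟨hh, -⟩) | (⟨hh, -⟩ | ⟨hh, -⟩))
      · exact hwx hh
      · exact hwy hh
      · exact hwu hh
      · exact hwv hh

lemma swap_reach {G : SimpleGraph V} {x y u v : V}
    (hreach : (G \ fromEdgeSet {s(x, y)}).Reachable x y)
    (hxu' : ¬G.Reachable x u) (huv : G.Adj u v) (hyvne : y ≠ v) (hxune : x ≠ u) :
    (∀ a b : V, G.Adj a b →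
      (G.deleteEdges {s(x, y), s(u, v)} ⊔ edge x u ⊔ edge y v).Reachable a b) := by
  set SG := G.deleteEdges {s(x, y), s(u, v)} ⊔ edge x u ⊔ edge y v with hSG
  obtain ⟨p, hp⟩ := reachable_delete_edges_iff_exists_walk.mp hreach
  have hsub : ∀ e ∈ p.edges, e ∈ SG.edgeSet := by
    intro e he
    have heG : e ∈ G.edgeSet := p.edges_subset_edgeSet he
    have hexy : e ≠ s(x, y) := fun h => hp (h ▸ he)
    have heuv : e ≠ s(u, v) := by
      rintro rfl
      exact hxu' ((p.takeUntil u (p.fst_mem_support_of_mem_edges he)).reachable)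
    have h1 : e ∈ (G.deleteEdges {s(x, y), s(u, v)}).edgeSet := by
      rw [edgeSet_deleteEdges]
      exact ⟨heG, by simp [hexy, heuv]⟩
    exact edgeSet_mono (le_sup_left.trans le_sup_left : G.deleteEdges {s(x, y), s(u, v)} ≤ SG) h1
  have hR1 : SG.Reachable x y := (p.transfer SG hsub).reachable
  have hAxu : SG.Adj x u := Or.inl (Or.inr ((edge_adj x u x u).2 ⟨Or.inl ⟨rfl, rfl⟩, hxune⟩))
  have hAyv : SG.Adj y v := Or.inr ((edge_adj y v y v).2 ⟨Or.inl ⟨rfl, rfl⟩, hyvne⟩)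
  have hR2 : SG.Reachable u v := (hAxu.symm.reachable.trans hR1).trans hAyv.reachable
  intro a b hab
  by_cases h1 : s(a, b) = s(x, y)
  · rw [Sym2.eq_iff] at h1
    rcases h1 with ⟨rfl, rfl⟩ | ⟨rfl, rfl⟩
    · exact hR1
    · exact hR1.symm
  by_cases h2 : s(a, b) = s(u, v)
  · rw [Sym2.eq_iff] at h2
    rcases h2 with ⟨rfl, rfl⟩ | ⟨rfl, rfl⟩
    · exact hR2
    · exact hR2.symm
  · exact Adj.reachable (Or.inl (Or.inl ⟨hab, by simp [h1, h2]⟩))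

lemma sum_ite_mem_sym2 (e : Sym2 V) (he : ¬e.IsDiag) :
    ∑ v : V, (if v ∈ e then 1 else 0) = 2 := by
  induction e using Sym2.ind with
  | _ a b =>
    rw [Sym2.mk_isDiag_iff] at he
    rw [Finset.sum_boole]
    have : Finset.univ.filter (fun v => v ∈ s(a, b)) = {a, b} := by
      ext w
      simp [Sym2.mem_iff]
    rw [this, Finset.card_pair he]
    rfl

lemma sum_ncard_neighbor (G : SimpleGraph V) :
    ∑ v, (G.neighborSet v).ncard = 2 * G.edgeSet.ncard := by
  classical
  have h1 : ∀ v, (G.neighborSet v).ncard = G.degree v := fun v => by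
    rw [Set.ncard_eq_toFinset_card', Set.toFinset_card, card_neighborSet_eq_degree]
  simp only [h1]
  rw [sum_degrees_eq_twice_card_edges, ← coe_edgeFinset, Set.ncard_coe_finset]

lemma fromRel_edge_card (M : Multiset (Sym2 V)) :
    (SimpleGraph.fromRel (fun a b => s(a, b) ∈ M)).edgeSet.ncard ≤ Multiset.card M := by
  classical
  have hsub : (SimpleGraph.fromRel (fun a b => s(a, b) ∈ M)).edgeSet ⊆ ↑M.toFinset := by
    intro e
    induction e using Sym2.ind with
    | _ a b =>
      intro he
      rw [mem_edgeSet, fromRel_adj] at he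
      obtain ⟨hne, h | h⟩ := he
      · simpa using h
      · rw [show s(a, b) = s(b, a) from Sym2.eq_swap]
        simpa using h
  calc (SimpleGraph.fromRel (fun a b => s(a, b) ∈ M)).edgeSet.ncard
      ≤ (↑M.toFinset : Set (Sym2 V)).ncard := Set.ncard_le_ncard hsub (Set.toFinite _)
    _ = M.toFinset.card := Set.ncard_coe_finset _
    _ ≤ Multiset.card M := Multiset.toFinset_card_le M

end Aux

lemma sum_mdeg {n : ℕ} (M : Multiset (Sym2 (Fin n))) (h : ∀ e ∈ M, ¬e.IsDiag) :
    ∑ v, mdeg M v = 2 * Multiset.card M := by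
  induction M using Multiset.induction with
  | empty => simp [mdeg]
  | cons e M ih =>
    have he : ¬e.IsDiag := h e (Multiset.mem_cons_self e M)
    have hM : ∀ f ∈ M, ¬f.IsDiag := fun f hf => h f (Multiset.mem_cons_of_mem hf)
    unfold mdeg
    simp only [Multiset.countP_cons]
    rw [Finset.sum_add_distrib]
    have h2 := ih hM
    unfold mdeg at h2
    rw [h2, sum_ite_mem_sym2 e he, Multiset.card_cons]
    ring

lemma realize_connected {n : ℕ} (d : Fin n → ℕ) [Nonempty (Fin n)]
    (hdpos : 1 < n → ∀ v, 0 < d v) (hsum : 2 * (n - 1) ≤ ∑ v, d v)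
    (G : SimpleGraph (Fin n)) (hGd : ∀ v, (G.neighborSet v).ncard = d v) :
    ∃ G' : SimpleGraph (Fin n), (∀ v, (G'.neighborSet v).ncard = d v) ∧ G'.Connected := by
  suffices h : ∀ k (G : SimpleGraph (Fin n)),
      {p : Fin n × Fin n | ¬G.Reachable p.1 p.2}.ncard = k →
      (∀ v, (G.neighborSet v).ncard = d v) →
      ∃ G' : SimpleGraph (Fin n), (∀ v, (G'.neighborSet v).ncard = d v) ∧ G'.Connected from
    h _ G rfl hGd
  intro k
  induction k using Nat.strong_induction_on with
  | _ k IH =>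
    intro G hk hG
    by_cases hc : G.Connected
    · exact ⟨G, hG, hc⟩
    obtain ⟨a, b, hab⟩ : ∃ a b : Fin n, ¬G.Reachable a b := by
      have hp : ¬G.Preconnected := fun h => hc ((connected_iff _).mpr ⟨h, ‹Nonempty (Fin n)›⟩)
      unfold SimpleGraph.Preconnected at hp
      push_neg at hp
      exact hp
    have habne : a ≠ b := by rintro rfl; exact hab (Reachable.refl _)
    have h2n : 1 < n := by
      have h9 : Nontrivial (Fin n) := ⟨a, b, habne⟩
      have := Fintype.one_lt_card_iff_nontrivial.2 h9
      rwa [Fintype.card_fin] at this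
    have hdpos' := hdpos h2n
    have hsumdeg : ∑ v, (G.neighborSet v).ncard = ∑ v, d v := by
      exact Finset.sum_congr rfl fun v _ => hG v
    have hedge : n - 1 ≤ G.edgeSet.ncard := by
      have := sum_ncard_neighbor G
      omega
    have hnac : ¬G.IsAcyclic := by
      intro hac
      have h5 := acyclic_sup_edge hac habne hab
      have h6 := acyclic_ncard (G ⊔ edge a b) h5
      have h7 : (G ⊔ edge a b).edgeSet.ncard = G.edgeSet.ncard + 1 :=
        edgeSet_ncard_sup_edge habne (fun h => hab h.reachable)
      rw [Fintype.card_fin] at h6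
      omega
    obtain ⟨x, y, hxy, hbr⟩ : ∃ x y, G.Adj x y ∧ ¬G.IsBridge s(x, y) := by
      by_contra h
      push_neg at h
      exact hnac (isAcyclic_iff_forall_adj_isBridge.2 fun v w hvw => h v w hvw)
    have hreach : (G \ SimpleGraph.fromEdgeSet {s(x, y)}).Reachable x y := by
      rw [isBridge_iff] at hbr
      push_neg at hbr
      exact hbr
    obtain ⟨u, hxu'⟩ : ∃ u, ¬G.Reachable x u := by
      by_cases h : G.Reachable x a
      · exact ⟨b, fun h2 => hab (h.symm.trans h2)⟩
      · exact ⟨a, h⟩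
    obtain ⟨v, huv⟩ : ∃ v, G.Adj u v := by
      have h9 := hdpos' u
      rw [← hG u] at h9
      obtain ⟨v, hv⟩ := (Set.ncard_pos (Set.toFinite _)).mp h9
      exact ⟨v, hv⟩
    have hxune : x ≠ u := fun h => hxu' (h ▸ Reachable.refl x)
    have hxu : ¬G.Adj x u := fun h => hxu' h.reachable
    have hxv : x ≠ v := fun h => hxu' (h ▸ huv.symm.reachable)
    have hyu : y ≠ u := fun h => hxu' (h ▸ hxy.reachable)
    have hyv' : ¬G.Reachable y v := fun h =>
      hxu' ((hxy.reachable.trans h).trans huv.symm.reachable)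
    have hyvne : y ≠ v := fun h => hyv' (h ▸ Reachable.refl y)
    have hyv : ¬G.Adj y v := fun h => hyv' h.reachable
    set SG := G.deleteEdges {s(x, y), s(u, v)} ⊔ edge x u ⊔ edge y v with hSG
    have hdeg : ∀ w, (SG.neighborSet w).ncard = d w := fun w =>
      (swap_deg hxy huv hxu hyv hxune hxv hyu hyvne w).trans (hG w)
    have htrans := swap_reach hreach hxu' huv hyvne hxune
    have hAxu : SG.Adj x u := Or.inl (Or.inr ((edge_adj x u x u).2 ⟨Or.inl ⟨rfl, rfl⟩, hxune⟩))
    have hsub1 : {p : Fin n × Fin n | ¬SG.Reachable p.1 p.2}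
        ⊆ {p : Fin n × Fin n | ¬G.Reachable p.1 p.2} := by
      intro p hp hGp
      exact hp (reach_transfer htrans hGp)
    have hne : {p : Fin n × Fin n | ¬SG.Reachable p.1 p.2}
        ≠ {p : Fin n × Fin n | ¬G.Reachable p.1 p.2} := by
      intro h
      have hmem : (x, u) ∈ {p : Fin n × Fin n | ¬G.Reachable p.1 p.2} := hxu'
      rw [← h] at hmem
      exact hmem hAxu.reachable
    have hss := hsub1.ssubset_of_ne hne
    have hlt : {p : Fin n × Fin n | ¬SG.Reachable p.1 p.2}.ncard < k :=
      hk ▸ Set.ncard_lt_ncard hss (Set.toFinite _)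
    exact IH _ hlt SG rfl hdeg

/-- A graphical degree sequence has a connected simple realization iff it has a
connected loopless multigraph realization (i.e. every potentially connected
graphical degree sequence has a connected simple realization). -/
theorem stmt5 {n : ℕ} (d : Fin n → ℕ) (hgr : Graphical d) :
    (∃ G : SimpleGraph (Fin n), (∀ v, (G.neighborSet v).ncard = d v) ∧ G.Connected) ↔
      (∃ M : Multiset (Sym2 (Fin n)),
        (∀ e ∈ M, ¬ e.IsDiag) ∧ (∀ v, mdeg M v = d v) ∧ mConnected M) := by
  classical
  constructor
  · rintro ⟨G, hGd, hGc⟩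
    letI : DecidableRel G.Adj := Classical.decRel _
    refine ⟨G.edgeFinset.val, ?_, ?_, ?_⟩
    · intro e he
      rw [Finset.mem_val, mem_edgeFinset] at he
      exact G.not_isDiag_of_mem_edgeSet he
    · intro v
      show Multiset.countP _ _ = _
      rw [Multiset.countP_eq_card_filter]
      have h1 : Multiset.card (Multiset.filter (fun e => v ∈ e) G.edgeFinset.val)
          = (G.edgeFinset.filter (fun e => v ∈ e)).card := by
        simp [Finset.filter]
      rw [h1]
      have h2 : G.edgeFinset.filter (fun e => v ∈ e) = G.incidenceFinset v := by
        ext e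
        simp [mem_incidenceFinset, incidenceSet, mem_edgeFinset, and_comm]
      rw [h2, card_incidenceFinset_eq_degree]
      rw [← hGd v, Set.ncard_eq_toFinset_card', Set.toFinset_card,
        card_neighborSet_eq_degree]
    · show (SimpleGraph.fromRel _).Connected
      have : SimpleGraph.fromRel (fun a b => s(a, b) ∈ G.edgeFinset.val) = G := by
        ext a b
        rw [fromRel_adj]
        constructor
        · rintro ⟨hne, h | h⟩
          · rwa [Finset.mem_val, mem_edgeFinset, mem_edgeSet] at h
          · rw [Finset.mem_val, mem_edgeFinset, mem_edgeSet] at h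
            exact h.symm
        · intro h
          exact ⟨h.ne, Or.inl (by rwa [Finset.mem_val, mem_edgeFinset, mem_edgeSet])⟩
      rw [this]
      exact hGc
  · rintro ⟨M, hMd, hMdeg, hMc⟩
    have hH : (SimpleGraph.fromRel (fun a b => s(a, b) ∈ M)).Connected := hMc
    have hne : Nonempty (Fin n) := hH.nonempty
    have hdpos : 1 < n → ∀ v, 0 < d v := by
      intro h2 v
      have hnt : Nontrivial (Fin n) := by
        rw [← Fintype.one_lt_card_iff_nontrivial, Fintype.card_fin]
        exact h2
      obtain ⟨w, hw⟩ := exists_ne v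
      obtain ⟨p⟩ := hH.preconnected v w
      rw [← hMdeg v]
      cases p with
      | nil => exact absurd rfl hw
      | cons h p' =>
        rw [SimpleGraph.fromRel_adj] at h
        show 0 < Multiset.countP _ M
        rcases h.2 with hm | hm
        · exact Multiset.countP_pos.mpr ⟨_, hm, Sym2.mem_mk_left _ _⟩
        · exact Multiset.countP_pos.mpr ⟨_, hm, Sym2.mem_mk_right _ _⟩
    have hsum : 2 * (n - 1) ≤ ∑ v, d v := by
      have h1 : ∑ v, d v = 2 * Multiset.card M := by
        rw [show (∑ v, d v) = ∑ v, mdeg M v from Finset.sum_congr rfl fun v _ => (hMdeg v).symm]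
        exact sum_mdeg M hMd
      have h2 := fromRel_edge_card M
      have h3 := connected_ncard_le _ hH
      rw [Fintype.card_fin] at h3
      omega
    obtain ⟨G₀, hG₀⟩ := hgr
    exact realize_connected d hdpos hsum G₀ hG₀
end

section
/- Havel–Hakimi theorem: Let d_1 ≥ d_2 ≥ ... ≥ d_n be nonnegative integers with d_1 = Δ ≤ n − 1. Then (d_1,...,d_n) is graphical if and only if the sequence (d_2 − 1, d_3 − 1, ..., d_{Δ+1} − 1, d_{Δ+2}, ..., d_n) is graphical. -/
set_option maxHeartbeats 1000000

open Set

lemma twoSwitch {m : ℕ} (G : SimpleGraph (Fin m)) {a b c e : Fin m}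
    (hab : G.Adj a b) (hce : G.Adj c e) (hac : ¬ G.Adj a c) (hbe : ¬ G.Adj b e)
    (hac' : a ≠ c) (hbe' : b ≠ e) (hae : a ≠ e) (hbc : b ≠ c) :
    ∃ H : SimpleGraph (Fin m),
      (∀ x, (H.neighborSet x).ncard = (G.neighborSet x).ncard) ∧
      H.neighborSet a = insert c (G.neighborSet a \ {b}) := by
  have hab' : a ≠ b := hab.ne
  have hce' : c ≠ e := hce.ne
  have s1 : b ≠ a := hab'.symm
  have s2 : e ≠ c := hce'.symm
  have s3 : c ≠ a := hac'.symm
  have s4 : e ≠ b := hbe'.symm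
  have s5 : e ≠ a := hae.symm
  have s6 : c ≠ b := hbc.symm
  set H : SimpleGraph (Fin m) :=
    { Adj := fun x y =>
        (G.Adj x y ∧ ¬(({x, y} : Set (Fin m)) = {a, b} ∨ ({x, y} : Set (Fin m)) = {c, e}))
        ∨ (({x, y} : Set (Fin m)) = {a, c} ∨ ({x, y} : Set (Fin m)) = {b, e}),
      symm := by
        constructor; intro x y h
        simp only [Set.pair_comm y x]
        rcases h with ⟨h1, h2⟩ | h
        · exact Or.inl ⟨h1.symm, h2⟩
        · exact Or.inr h,
      loopless := by
        constructor; intro x h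
        rcases h with ⟨h1, _⟩ | h | h
        · exact G.loopless.irrefl x h1
        · rw [Set.pair_eq_pair_iff] at h
          rcases h with ⟨h1, h2⟩ | ⟨h1, h2⟩
          · exact hac' (h1.symm.trans h2)
          · exact s3 (h1.symm.trans h2)
        · rw [Set.pair_eq_pair_iff] at h
          rcases h with ⟨h1, h2⟩ | ⟨h1, h2⟩
          · exact hbe' (h1.symm.trans h2)
          · exact s4 (h1.symm.trans h2) } with hH
  have adjH : ∀ x y, H.Adj x y ↔
      ((G.Adj x y ∧ ¬(({x, y} : Set (Fin m)) = {a, b} ∨ ({x, y} : Set (Fin m)) = {c, e}))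
        ∨ (({x, y} : Set (Fin m)) = {a, c} ∨ ({x, y} : Set (Fin m)) = {b, e})) := by
    intro x y; rw [hH]
  have hNa : H.neighborSet a = insert c (G.neighborSet a \ {b}) := by
    ext y
    simp only [SimpleGraph.mem_neighborSet, adjH, Set.pair_eq_pair_iff, Set.mem_insert_iff,
      Set.mem_diff, Set.mem_singleton_iff, true_and, and_true, not_or]
    try tauto
  have hNb : H.neighborSet b = insert e (G.neighborSet b \ {a}) := by
    ext y
    simp only [SimpleGraph.mem_neighborSet, adjH, Set.pair_eq_pair_iff, Set.mem_insert_iff,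
      Set.mem_diff, Set.mem_singleton_iff, true_and, and_true, not_or]
    try tauto
  have hNc : H.neighborSet c = insert a (G.neighborSet c \ {e}) := by
    ext y
    simp only [SimpleGraph.mem_neighborSet, adjH, Set.pair_eq_pair_iff, Set.mem_insert_iff,
      Set.mem_diff, Set.mem_singleton_iff, true_and, and_true, not_or]
    try tauto
  have hNe : H.neighborSet e = insert b (G.neighborSet e \ {c}) := by
    ext y
    simp only [SimpleGraph.mem_neighborSet, adjH, Set.pair_eq_pair_iff, Set.mem_insert_iff,
      Set.mem_diff, Set.mem_singleton_iff, true_and, and_true, not_or]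
    try tauto
  have hNo : ∀ x, x ≠ a → x ≠ b → x ≠ c → x ≠ e → H.neighborSet x = G.neighborSet x := by
    intro x hxa hxb hxc hxe
    ext y
    simp only [SimpleGraph.mem_neighborSet, adjH, Set.pair_eq_pair_iff]
    try tauto
  refine ⟨H, ?_, hNa⟩
  intro x
  by_cases hx1 : x = a
  · subst hx1; rw [hNa]; exact Set.ncard_exchange (fun h => hac h) hab
  by_cases hx2 : x = b
  · subst hx2; rw [hNb]; exact Set.ncard_exchange (fun h => hbe h) hab.symm
  by_cases hx3 : x = c
  · subst hx3; rw [hNc]; exact Set.ncard_exchange (fun h => hac h.symm) hce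
  by_cases hx4 : x = e
  · subst hx4; rw [hNe]; exact Set.ncard_exchange (fun h => hbe h.symm) hce.symm
  · rw [hNo x hx1 hx2 hx3 hx4]


/-- A sequence of integers is graphical if some finite simple graph realizes
it as its degree sequence (in particular all entries are nonnegative). -/
def GraphicalZ {m : ℕ} (d : Fin m → ℤ) : Prop :=
  ∃ G : SimpleGraph (Fin m), ∀ v, ((G.neighborSet v).ncard : ℤ) = d v

/-- Havel–Hakimi theorem: for `d 0 = Δ ≥ d 1 ≥ ... ≥ d n` with `Δ ≤ n`,
the sequence `d` is graphical iff the sequence obtained by deleting `d 0` and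
decrementing the next `Δ` entries is graphical. -/
theorem stmt6 {n : ℕ} (d : Fin (n + 1) → ℤ) (hnn : ∀ i, 0 ≤ d i)
    (hsort : ∀ i j : Fin (n + 1), i ≤ j → d j ≤ d i)
    (hΔ : d 0 ≤ (n : ℤ)) :
    GraphicalZ d ↔
      GraphicalZ (fun i : Fin n =>
        if ((i : ℕ) : ℤ) < d 0 then d i.succ - 1 else d i.succ) := by
  have hd0 : d 0 = ((d 0).toNat : ℤ) := (Int.toNat_of_nonneg (hnn 0)).symm
  set Δ : ℕ := (d 0).toNat with hΔdef
  have hΔn : Δ ≤ n := by omega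
  set T : Set (Fin (n + 1)) := {x | x ≠ 0 ∧ (x : ℕ) ≤ Δ} with hTdef
  have hval0 : ∀ x : Fin (n + 1), x ≠ 0 ↔ (x : ℕ) ≠ 0 := by
    intro x
    rw [ne_eq, Fin.ext_iff, Fin.val_zero]
  have hTcard : T.ncard = Δ := by
    have hinj : Function.Injective (fun i : Fin Δ => (⟨i.val + 1, by omega⟩ : Fin (n + 1))) := by
      intro i j h
      have : i.val + 1 = j.val + 1 := congrArg Fin.val h
      exact Fin.ext (by omega)
    have himg : (fun i : Fin Δ => (⟨i.val + 1, by omega⟩ : Fin (n + 1))) '' Set.univ = T := by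
      ext x
      simp only [Set.image_univ, Set.mem_range, hTdef, Set.mem_setOf_eq]
      constructor
      · rintro ⟨i, rfl⟩
        refine ⟨?_, by simp⟩
        rw [hval0]; simp
      · rintro ⟨hx0, hxΔ⟩
        rw [hval0] at hx0
        exact ⟨⟨x.val - 1, by omega⟩, Fin.ext (by simp; omega)⟩
    rw [← himg, Set.ncard_image_of_injective _ hinj, Set.ncard_univ, Nat.card_eq_fintype_card,
      Fintype.card_fin]
  have hsuccT : ∀ k : Fin n, k.succ ∈ T ↔ (k : ℕ) < Δ := by
    intro k
    simp only [hTdef, Set.mem_setOf_eq, Fin.val_succ]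
    constructor
    · rintro ⟨-, h⟩; omega
    · intro h; exact ⟨Fin.succ_ne_zero k, by omega⟩
  have hcond : ∀ k : Fin n, (((k : ℕ) : ℤ) < d 0) ↔ (k : ℕ) < Δ := by
    intro k; omega
  constructor
  · -- forward direction
    rintro ⟨G0, hG0⟩
    set P : SimpleGraph (Fin (n + 1)) → Prop :=
      fun G => ∀ v, ((G.neighborSet v).ncard : ℤ) = d v with hPdef
    set S : Set ℕ := {k | ∃ G, P G ∧ (G.neighborSet 0 \ T).ncard = k} with hSdef
    have hSne : S.Nonempty := ⟨_, G0, hG0, rfl⟩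
    obtain ⟨G, hPG, hmG⟩ := Nat.sInf_mem hSne
    have hcard0 : (G.neighborSet 0).ncard = Δ := by
      have := hPG 0
      omega
    have hN0 : G.neighborSet 0 = T := by
      by_contra hne
      have hv : (G.neighborSet 0 \ T).Nonempty := by
        rw [Set.nonempty_iff_ne_empty]
        intro h
        rw [Set.diff_eq_empty] at h
        exact hne (Set.eq_of_subset_of_ncard_le h (by rw [hTcard, hcard0]))
      have hu : (T \ G.neighborSet 0).Nonempty := by
        rw [Set.nonempty_iff_ne_empty]
        intro h
        rw [Set.diff_eq_empty] at h
        exact hne ((Set.eq_of_subset_of_ncard_le h (by rw [hTcard, hcard0])).symm)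
      obtain ⟨v, hvN, hvT⟩ := hv
      obtain ⟨u, huT, huN⟩ := hu
      have hv0 : G.Adj 0 v := hvN
      have hvne0 : v ≠ 0 := hv0.ne'
      have hune0 : u ≠ 0 := huT.1
      have huval : (u : ℕ) ≤ Δ := huT.2
      have hvval : Δ < (v : ℕ) := by
        by_contra h
        exact hvT ⟨hvne0, by omega⟩
      have huv : (u : ℕ) < (v : ℕ) := by omega
      have huvne : u ≠ v := fun h => by simp [h] at huv
      have hdeg : (G.neighborSet v).ncard ≤ (G.neighborSet u).ncard := by
        have h1 := hsort u v (by rw [Fin.le_def]; omega)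
        have h2 := hPG u
        have h3 := hPG v
        omega
      have h0Nv : (0 : Fin (n + 1)) ∈ G.neighborSet v := hv0.symm
      have h0Nu : (0 : Fin (n + 1)) ∉ G.neighborSet u := by
        intro h
        exact huN ((h : G.Adj u 0).symm : G.Adj 0 u)
      have hwex : ∃ w, w ∈ G.neighborSet u ∧ w ∉ G.neighborSet v ∧ w ≠ v := by
        by_contra hw
        push_neg at hw
        by_cases huvadj : G.Adj u v
        · have hsub : G.neighborSet u \ {v} ⊆ G.neighborSet v \ {0, u} := by
            rintro w ⟨hwNu, hwv⟩
            rw [Set.mem_singleton_iff] at hwv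
            have hwNv : w ∈ G.neighborSet v := by
              by_contra hc
              exact hwv (hw w hwNu hc)
            refine ⟨hwNv, ?_⟩
            simp only [Set.mem_insert_iff, Set.mem_singleton_iff, not_or]
            refine ⟨fun h => h0Nu (h ▸ hwNu), fun h => G.loopless.irrefl u (h ▸ hwNu)⟩
          have h1 : (G.neighborSet u \ {v}).ncard + 1 = (G.neighborSet u).ncard :=
            Set.ncard_diff_singleton_add_one huvadj
          have hsub2 : ({0, u} : Set (Fin (n + 1))) ⊆ G.neighborSet v := by
            rintro x (rfl | rfl)
            · exact h0Nv
            · exact huvadj.symm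
          have h2 : (G.neighborSet v \ {0, u}).ncard
              = (G.neighborSet v).ncard - ({0, u} : Set (Fin (n + 1))).ncard :=
            Set.ncard_diff hsub2
          have h3 : ({0, u} : Set (Fin (n + 1))).ncard = 2 := Set.ncard_pair (Ne.symm hune0)
          have h4 : 2 ≤ (G.neighborSet v).ncard := by
            rw [← h3]; exact Set.ncard_le_ncard hsub2
          have h5 := Set.ncard_le_ncard hsub (Set.toFinite _)
          omega
        · have hsub : G.neighborSet u ⊆ G.neighborSet v \ {0} := by
            intro w hwNu
            have hwNv : w ∈ G.neighborSet v := by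
              by_contra hc
              exact huvadj ((hw w hwNu hc) ▸ hwNu)
            exact ⟨hwNv, fun h => h0Nu (h ▸ hwNu)⟩
          have h1 : (G.neighborSet v \ {0}).ncard + 1 = (G.neighborSet v).ncard :=
            Set.ncard_diff_singleton_add_one h0Nv
          have h5 := Set.ncard_le_ncard hsub (Set.toFinite _)
          omega
      obtain ⟨w, hwNu, hwNv, hwv⟩ := hwex
      have hw0 : w ≠ 0 := fun h => h0Nu (h ▸ hwNu)
      have hwu : w ≠ u := fun h => G.loopless.irrefl u (h ▸ hwNu)
      obtain ⟨H, hHdeg, hHN⟩ := twoSwitch G (a := 0) (b := v) (c := u) (e := w)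
        hv0 hwNu (fun h => huN h) (fun h => hwNv h)
        (Ne.symm hune0) (Ne.symm hwv) (Ne.symm hw0) (Ne.symm huvne)
      have hPH : P H := fun x => by rw [hHdeg x]; exact hPG x
      have hHset : H.neighborSet 0 \ T = (G.neighborSet 0 \ T) \ {v} := by
        rw [hHN]
        ext x
        simp only [Set.mem_diff, Set.mem_insert_iff, Set.mem_singleton_iff]
        constructor
        · rintro ⟨rfl | ⟨hx1, hx2⟩, hxT⟩
          · exact absurd huT hxT
          · exact ⟨⟨hx1, hxT⟩, hx2⟩
        · rintro ⟨⟨hx1, hxT⟩, hx2⟩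
          exact ⟨Or.inr ⟨hx1, hx2⟩, hxT⟩
      have hvmem : v ∈ G.neighborSet 0 \ T := ⟨hvN, hvT⟩
      have hc1 : ((G.neighborSet 0 \ T) \ {v}).ncard + 1 = (G.neighborSet 0 \ T).ncard :=
        Set.ncard_diff_singleton_add_one hvmem
      have hle : sInf S ≤ (H.neighborSet 0 \ T).ncard := Nat.sInf_le ⟨H, hPH, rfl⟩
      rw [hHset] at hle
      omega
    -- now decompose G
    refine ⟨⟨fun i j => G.Adj i.succ j.succ, ⟨fun _ _ h => h.symm⟩,
      ⟨fun i h => G.loopless.irrefl i.succ h⟩⟩, ?_⟩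
    intro k
    dsimp only
    set G' : SimpleGraph (Fin n) := ⟨fun i j => G.Adj i.succ j.succ, ⟨fun _ _ h => h.symm⟩,
      ⟨fun i h => G.loopless.irrefl i.succ h⟩⟩ with hG'def
    have himg : Fin.succ '' G'.neighborSet k = G.neighborSet k.succ \ {0} := by
      ext x
      simp only [Set.mem_image, Set.mem_diff, Set.mem_singleton_iff,
        SimpleGraph.mem_neighborSet]
      constructor
      · rintro ⟨j, hj, rfl⟩
        exact ⟨hj, Fin.succ_ne_zero j⟩
      · rintro ⟨hx, hx0⟩
        refine ⟨x.pred hx0, ?_, Fin.succ_pred x hx0⟩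
        show G.Adj k.succ (x.pred hx0).succ
        rwa [Fin.succ_pred]
    have hcard' : (G'.neighborSet k).ncard = (G.neighborSet k.succ \ {0}).ncard := by
      rw [← himg, Set.ncard_image_of_injective _ (Fin.succ_injective n)]
    have hmem0 : (0 : Fin (n + 1)) ∈ G.neighborSet k.succ ↔ (k : ℕ) < Δ := by
      rw [SimpleGraph.mem_neighborSet, G.adj_comm, ← SimpleGraph.mem_neighborSet, hN0]
      exact hsuccT k
    by_cases hk : (k : ℕ) < Δ
    · rw [if_pos ((hcond k).mpr hk)]
      have h1 : (G.neighborSet k.succ \ {0}).ncard + 1 = (G.neighborSet k.succ).ncard :=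
        Set.ncard_diff_singleton_add_one (hmem0.mpr hk)
      have h2 := hPG k.succ
      omega
    · rw [if_neg (fun h => hk ((hcond k).mp h))]
      rw [hcard', Set.diff_singleton_eq_self (fun h => hk (hmem0.mp h))]
      exact hPG k.succ
  · -- backward direction
    rintro ⟨G', hG'⟩
    refine ⟨⟨fun x y => (x = 0 ∧ y ∈ T) ∨ (y = 0 ∧ x ∈ T) ∨
        (∃ i j : Fin n, x = i.succ ∧ y = j.succ ∧ G'.Adj i j), ?_, ?_⟩, ?_⟩
    · constructor; rintro x y (h | h | ⟨i, j, hx, hy, hadj⟩)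
      · exact Or.inr (Or.inl h)
      · exact Or.inl h
      · exact Or.inr (Or.inr ⟨j, i, hy, hx, hadj.symm⟩)
    · constructor; rintro x (⟨h1, h2⟩ | ⟨h1, h2⟩ | ⟨i, j, hx, hy, hadj⟩)
      · exact h2.1 h1
      · exact h2.1 h1
      · have : i = j := Fin.succ_injective n (hx.symm.trans hy)
        exact G'.loopless.irrefl i (this ▸ hadj)
    · intro v
      set G : SimpleGraph (Fin (n + 1)) :=
        ⟨fun x y => (x = 0 ∧ y ∈ T) ∨ (y = 0 ∧ x ∈ T) ∨
          (∃ i j : Fin n, x = i.succ ∧ y = j.succ ∧ G'.Adj i j), by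
            constructor; rintro x y (h | h | ⟨i, j, hx, hy, hadj⟩)
            · exact Or.inr (Or.inl h)
            · exact Or.inl h
            · exact Or.inr (Or.inr ⟨j, i, hy, hx, hadj.symm⟩), by
            constructor; rintro x (⟨h1, h2⟩ | ⟨h1, h2⟩ | ⟨i, j, hx, hy, hadj⟩)
            · exact h2.1 h1
            · exact h2.1 h1
            · have : i = j := Fin.succ_injective n (hx.symm.trans hy)
              exact G'.loopless.irrefl i (this ▸ hadj)⟩ with hGdef
      show ((G.neighborSet v).ncard : ℤ) = d v
      have hadjG : ∀ x y, G.Adj x y ↔ ((x = 0 ∧ y ∈ T) ∨ (y = 0 ∧ x ∈ T) ∨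
          (∃ i j : Fin n, x = i.succ ∧ y = j.succ ∧ G'.Adj i j)) := fun x y => Iff.rfl
      induction v using Fin.cases with
      | zero =>
        have hN : G.neighborSet 0 = T := by
          ext y
          rw [SimpleGraph.mem_neighborSet, hadjG]
          constructor
          · rintro (⟨-, h⟩ | ⟨rfl, h⟩ | ⟨i, j, hx, -, -⟩)
            · exact h
            · exact absurd rfl h.1
            · exact absurd hx.symm (Fin.succ_ne_zero i)
          · intro h
            exact Or.inl ⟨rfl, h⟩
        rw [hN, hTcard]
        omega
      | succ k =>
        have hN : G.neighborSet k.succ =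
            (if (k : ℕ) < Δ then insert (0 : Fin (n + 1)) (Fin.succ '' G'.neighborSet k)
             else Fin.succ '' G'.neighborSet k) := by
          ext y
          rw [SimpleGraph.mem_neighborSet, hadjG]
          constructor
          · rintro (⟨h, -⟩ | ⟨rfl, hT⟩ | ⟨i, j, hx, rfl, hadj⟩)
            · exact absurd h (Fin.succ_ne_zero k)
            · rw [if_pos ((hsuccT k).mp hT)]
              exact Set.mem_insert _ _
            · have hik : i = k := Fin.succ_injective n hx.symm
              rw [hik] at hadj
              have hmem : j.succ ∈ Fin.succ '' G'.neighborSet k := ⟨j, hadj, rfl⟩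
              split
              · exact Set.mem_insert_of_mem _ hmem
              · exact hmem
          · intro h
            split at h
            · rcases h with rfl | ⟨j, hj, rfl⟩
              · exact Or.inr (Or.inl ⟨rfl, (hsuccT k).mpr (by assumption)⟩)
              · exact Or.inr (Or.inr ⟨k, j, rfl, rfl, hj⟩)
            · rcases h with ⟨j, hj, rfl⟩
              exact Or.inr (Or.inr ⟨k, j, rfl, rfl, hj⟩)
        have hicard : (Fin.succ '' G'.neighborSet k).ncard = (G'.neighborSet k).ncard :=
          Set.ncard_image_of_injective _ (Fin.succ_injective n)
        have hG'k := hG' k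
        dsimp only at hG'k
        by_cases hk : (k : ℕ) < Δ
        · rw [hN, if_pos hk]
          rw [Set.ncard_insert_of_notMem (by rintro ⟨j, -, hj⟩; exact Fin.succ_ne_zero j hj)]
          rw [if_pos ((hcond k).mpr hk)] at hG'k
          omega
        · rw [hN, if_neg hk, hicard]
          rw [if_neg (fun h => hk ((hcond k).mp h))] at hG'k
          exact hG'k
end

section
/- Generalized Havel–Hakimi step with arbitrary hub: Let (d_1,...,d_n) be a degree sequence, let i be any index with d_i = Δ > 0, and suppose the sequence is graphical. Then after connecting vertex i to the Δ vertices (other than i) of largest remaining degree and decrementing their degrees, the resulting sequence is graphical; conversely if the resulting sequence is graphical then so was the original. -/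
open Finset SimpleGraph
set_option maxHeartbeats 1000000

lemma ncardDeg {n : ℕ} (G : SimpleGraph (Fin n)) [DecidableRel G.Adj] (v : Fin n) :
    (G.neighborSet v).ncard = G.degree v := by
  rw [Set.ncard_eq_toFinset_card', SimpleGraph.degree, SimpleGraph.neighborFinset_def]

lemma gz_iff {m : ℕ} (d : Fin m → ℤ) : GraphicalZ d ↔
    ∃ G : SimpleGraph (Fin m), ∃ _ : DecidableRel G.Adj, ∀ v, (G.degree v : ℤ) = d v := by
  constructor
  · rintro ⟨G, hG⟩
    classical
    exact ⟨G, inferInstance, fun v => by rw [← ncardDeg]; exact hG v⟩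
  · rintro ⟨G, _, hG⟩
    exact ⟨G, fun v => by rw [ncardDeg]; exact hG v⟩

lemma card_insert_erase {α : Type*} [DecidableEq α] {s : Finset α} {a b : α}
    (hb : b ∈ s) (ha : a ∉ s) : (insert a (s.erase b)).card = s.card := by
  rw [Finset.card_insert_of_notMem (fun h => ha (Finset.mem_of_mem_erase h)),
    Finset.card_erase_of_mem hb]
  have := Finset.card_pos.mpr ⟨b, hb⟩
  omega

/-- The 2-switch: remove edges ik, jl; add edges ij, kl. -/
def swG {n : ℕ} (G : SimpleGraph (Fin n)) (i j k l : Fin n)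
    (hij : i ≠ j) (hkl : k ≠ l) : SimpleGraph (Fin n) where
  Adj a b := (G.Adj a b ∧ ¬((a=i∧b=k)∨(a=k∧b=i)∨(a=j∧b=l)∨(a=l∧b=j))) ∨
             ((a=i∧b=j)∨(a=j∧b=i)∨(a=k∧b=l)∨(a=l∧b=k))
  symm := by
    constructor
    rintro a b (⟨h, hn⟩ | h)
    · exact Or.inl ⟨h.symm, by tauto⟩
    · exact Or.inr (by tauto)
  loopless := by
    constructor
    rintro a (⟨h, _⟩ | h)
    · exact G.loopless.irrefl a h
    · rcases h with ⟨h1,h2⟩|⟨h1,h2⟩|⟨h1,h2⟩|⟨h1,h2⟩ <;> subst h1 <;> simp_all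

instance swGdec {n : ℕ} (G : SimpleGraph (Fin n)) [DecidableRel G.Adj] (i j k l : Fin n)
    (hij : i ≠ j) (hkl : k ≠ l) : DecidableRel (swG G i j k l hij hkl).Adj := by
  intro a b
  unfold swG
  infer_instance

lemma swG_spec {n : ℕ} (G : SimpleGraph (Fin n)) [DecidableRel G.Adj] {i j k l : Fin n}
    (hij : i ≠ j) (hik : i ≠ k) (hil : i ≠ l) (hjk : j ≠ k) (hjl : j ≠ l) (hkl : k ≠ l)
    (aik : G.Adj i k) (ajl : G.Adj j l) (nij : ¬ G.Adj i j) (nkl : ¬ G.Adj k l) :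
    ∃ G' : SimpleGraph (Fin n), ∃ _ : DecidableRel G'.Adj,
      (∀ v, G'.degree v = G.degree v) ∧
      G'.neighborFinset i = insert j ((G.neighborFinset i).erase k) := by
  have hji : j ≠ i := hij.symm
  have hki : k ≠ i := hik.symm
  have hli : l ≠ i := hil.symm
  have hkj : k ≠ j := hjk.symm
  have hlj : l ≠ j := hjl.symm
  have hlk : l ≠ k := hkl.symm
  letI : DecidableRel (swG G i j k l hij hkl).Adj := swGdec G i j k l hij hkl
  have hNi : (swG G i j k l hij hkl).neighborFinset i
      = insert j ((G.neighborFinset i).erase k) := by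
    ext w
    simp only [mem_neighborFinset, mem_insert, mem_erase]; simp only [swG]
    constructor
    · intro h
      rcases h with ⟨h, hn⟩ | h
      · right; exact ⟨fun hw => hn (by tauto), h⟩
      · left; aesop
    · intro h
      rcases h with rfl | ⟨hwk, h⟩
      · right; tauto
      · left; refine ⟨h, ?_⟩; aesop
  have hNj : (swG G i j k l hij hkl).neighborFinset j
      = insert i ((G.neighborFinset j).erase l) := by
    ext w
    simp only [mem_neighborFinset, mem_insert, mem_erase]; simp only [swG]
    constructor
    · intro h
      rcases h with ⟨h, hn⟩ | h
      · right; exact ⟨fun hw => hn (by tauto), h⟩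
      · left; aesop
    · intro h
      rcases h with rfl | ⟨hwl, h⟩
      · right; tauto
      · left; refine ⟨h, ?_⟩; aesop
  have hNk : (swG G i j k l hij hkl).neighborFinset k
      = insert l ((G.neighborFinset k).erase i) := by
    ext w
    simp only [mem_neighborFinset, mem_insert, mem_erase]; simp only [swG]
    constructor
    · intro h
      rcases h with ⟨h, hn⟩ | h
      · right; exact ⟨fun hw => hn (by tauto), h⟩
      · left; aesop
    · intro h
      rcases h with rfl | ⟨hwi, h⟩
      · right; tauto
      · left; refine ⟨h, ?_⟩; aesop
  have hNl : (swG G i j k l hij hkl).neighborFinset l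
      = insert k ((G.neighborFinset l).erase j) := by
    ext w
    simp only [mem_neighborFinset, mem_insert, mem_erase]; simp only [swG]
    constructor
    · intro h
      rcases h with ⟨h, hn⟩ | h
      · right; exact ⟨fun hw => hn (by tauto), h⟩
      · left; aesop
    · intro h
      rcases h with rfl | ⟨hwj, h⟩
      · right; tauto
      · left; refine ⟨h, ?_⟩; aesop
  have hNv : ∀ v, v ≠ i → v ≠ j → v ≠ k → v ≠ l →
      (swG G i j k l hij hkl).neighborFinset v = G.neighborFinset v := by
    intro v hvi hvj hvk hvl
    ext w
    simp only [mem_neighborFinset]; simp only [swG]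
    constructor
    · intro h; rcases h with ⟨h, _⟩ | h
      · exact h
      · exfalso; aesop
    · intro h; left; exact ⟨h, by aesop⟩
  refine ⟨swG G i j k l hij hkl, inferInstance, ?_, hNi⟩
  intro v
  rw [SimpleGraph.degree, SimpleGraph.degree]
  by_cases hvi : v = i
  · subst hvi
    rw [hNi, card_insert_erase ((mem_neighborFinset G v k).2 aik)
      (fun h => nij ((mem_neighborFinset G v j).1 h))]
  · by_cases hvj : v = j
    · subst hvj
      rw [hNj, card_insert_erase ((mem_neighborFinset G v l).2 ajl)
        (fun h => nij (((mem_neighborFinset G v i).1 h)).symm)]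
    · by_cases hvk : v = k
      · subst hvk
        rw [hNk, card_insert_erase ((mem_neighborFinset G v i).2 aik.symm)
          (fun h => nkl ((mem_neighborFinset G v l).1 h))]
      · by_cases hvl : v = l
        · subst hvl
          rw [hNl, card_insert_erase ((mem_neighborFinset G v j).2 ajl.symm)
            (fun h => nkl (((mem_neighborFinset G v k).1 h)).symm)]
        · rw [hNv v hvi hvj hvk hvl]

lemma key_aux {n : ℕ} : ∀ (m : ℕ) (G : SimpleGraph (Fin n)) (_ : DecidableRel G.Adj)
    (i : Fin n) (S : Finset (Fin n)), i ∉ S → S.card = G.degree i →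
    (∀ j ∈ S, ∀ k, k ∉ S → k ≠ i → G.degree k ≤ G.degree j) →
    (S \ G.neighborFinset i).card = m →
    ∃ G' : SimpleGraph (Fin n), ∃ _ : DecidableRel G'.Adj,
      (∀ v, G'.degree v = G.degree v) ∧ G'.neighborFinset i = S := by
  intro m
  induction m with
  | zero =>
    intro G hdec i S hiS hcard hmax hm
    have hsub : S ⊆ G.neighborFinset i := by
      rw [← Finset.sdiff_eq_empty_iff_subset]
      exact Finset.card_eq_zero.mp hm
    have hd : #(G.neighborFinset i) = G.degree i := G.card_neighborFinset_eq_degree i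
    exact ⟨G, hdec, fun v => rfl,
      (Finset.eq_of_subset_of_card_le hsub (by omega)).symm⟩
  | succ m IH =>
    intro G hdec i S hiS hcard hmax hm
    obtain ⟨j, hj⟩ := Finset.card_pos.mp (by omega : 0 < (S \ G.neighborFinset i).card)
    obtain ⟨hjS, hjN⟩ := Finset.mem_sdiff.mp hj
    have hNS : ¬ G.neighborFinset i ⊆ S := by
      intro hsub
      have hd : #(G.neighborFinset i) = G.degree i := G.card_neighborFinset_eq_degree i
      have : G.neighborFinset i = S :=
        Finset.eq_of_subset_of_card_le hsub (by omega)
      exact hjN (this ▸ hjS)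
    obtain ⟨k, hkN, hkS⟩ := Finset.not_subset.mp hNS
    have aik : G.Adj i k := (mem_neighborFinset G i k).mp hkN
    have nij : ¬ G.Adj i j := fun h => hjN ((mem_neighborFinset G i j).mpr h)
    have hki : k ≠ i := fun h => G.loopless.irrefl i (h ▸ aik)
    have hji : j ≠ i := fun h => hiS (h ▸ hjS)
    have hjk : j ≠ k := fun h => hkS (h ▸ hjS)
    have hdegkj : G.degree k ≤ G.degree j := hmax j hjS k hkS hki
    -- find the pivot l
    have hiNj : i ∉ G.neighborFinset j := fun h =>
      nij (((mem_neighborFinset G j i).mp h).symm)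
    have hiNk : i ∈ G.neighborFinset k := (mem_neighborFinset G k i).mpr aik.symm
    have hT : ((G.neighborFinset j) \ (insert i (insert k (G.neighborFinset k)))).Nonempty := by
      rw [Finset.sdiff_nonempty]
      intro hsub
      by_cases hkNj : k ∈ G.neighborFinset j
      · have hjNk : j ∈ G.neighborFinset k :=
          (mem_neighborFinset G k j).mpr ((mem_neighborFinset G j k).mp hkNj).symm
        have hsub2 : G.neighborFinset j ⊆ insert k (((G.neighborFinset k).erase i).erase j) := by
          intro x hx
          have hxi : x ≠ i := fun h => hiNj (h ▸ hx)
          have hxj : x ≠ j := fun h => G.notMem_neighborFinset_self j (h ▸ hx)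
          have := hsub hx
          simp only [Finset.mem_insert] at this ⊢
          rcases this with h | h | h
          · exact absurd h hxi
          · exact Or.inl h
          · exact Or.inr (Finset.mem_erase.mpr ⟨hxj, Finset.mem_erase.mpr ⟨hxi, h⟩⟩)
        have h1 : G.degree j ≤ (((G.neighborFinset k).erase i).erase j).card + 1 :=
          le_trans (Finset.card_le_card hsub2) (Finset.card_insert_le _ _)
        have h2 : (((G.neighborFinset k).erase i).erase j).card = G.degree k - 1 - 1 := by
          rw [Finset.card_erase_of_mem (Finset.mem_erase.mpr ⟨hji, hjNk⟩),
            Finset.card_erase_of_mem hiNk, G.card_neighborFinset_eq_degree]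
        have h3 : 1 ≤ ((G.neighborFinset k).erase i).card :=
          Finset.card_pos.mpr ⟨j, Finset.mem_erase.mpr ⟨hji, hjNk⟩⟩
        rw [Finset.card_erase_of_mem hiNk, G.card_neighborFinset_eq_degree] at h3
        omega
      · have hsub2 : G.neighborFinset j ⊆ ((G.neighborFinset k).erase i).erase j := by
          intro x hx
          have hxi : x ≠ i := fun h => hiNj (h ▸ hx)
          have hxj : x ≠ j := fun h => G.notMem_neighborFinset_self j (h ▸ hx)
          have hxk : x ≠ k := fun h => hkNj (h ▸ hx)
          have := hsub hx
          simp only [Finset.mem_insert] at this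
          rcases this with h | h | h
          · exact absurd h hxi
          · exact absurd h hxk
          · exact Finset.mem_erase.mpr ⟨hxj, Finset.mem_erase.mpr ⟨hxi, h⟩⟩
        have h1 : G.degree j ≤ (((G.neighborFinset k).erase i).erase j).card :=
          Finset.card_le_card hsub2
        have h2 : (((G.neighborFinset k).erase i).erase j).card
            ≤ ((G.neighborFinset k).erase i).card := Finset.card_erase_le
        have h3 : ((G.neighborFinset k).erase i).card = G.degree k - 1 := by
          rw [Finset.card_erase_of_mem hiNk, G.card_neighborFinset_eq_degree]
        have h4 : 1 ≤ G.degree k := by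
          rw [← G.card_neighborFinset_eq_degree]
          exact Finset.card_pos.mpr ⟨i, hiNk⟩
        omega
    obtain ⟨l, hl⟩ := hT
    rw [Finset.mem_sdiff, Finset.mem_insert, Finset.mem_insert] at hl
    obtain ⟨hlNj, hlnot⟩ := hl
    push_neg at hlnot
    obtain ⟨hli, hlk, hlNk⟩ := hlnot
    have ajl : G.Adj j l := (mem_neighborFinset G j l).mp hlNj
    have nkl : ¬ G.Adj k l := fun h => hlNk ((mem_neighborFinset G k l).mpr h)
    have hjl : j ≠ l := ajl.ne
    obtain ⟨G', dec', hdeg', hN'⟩ := swG_spec G hji.symm hki.symm (Ne.symm hli) hjk hjl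
      (Ne.symm hlk) aik ajl nij nkl
    have hmeas : (S \ G'.neighborFinset i).card = m := by
      rw [hN']
      have e1 : S \ insert j ((G.neighborFinset i).erase k)
          = (S \ (G.neighborFinset i).erase k).erase j := Finset.sdiff_insert _ _ _
      have e2 : S \ (G.neighborFinset i).erase k = S \ G.neighborFinset i := by
        ext x
        simp only [Finset.mem_sdiff, Finset.mem_erase]
        constructor
        · rintro ⟨hx, h⟩
          exact ⟨hx, fun hm' => h ⟨fun he => hkS (he ▸ hx), hm'⟩⟩
        · rintro ⟨hx, h⟩
          exact ⟨hx, fun hm' => h hm'.2⟩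
      rw [e1, e2, Finset.card_erase_of_mem hj, hm]
      omega
    obtain ⟨G'', dec'', hdeg'', hN''⟩ := IH G' dec' i S hiS
      (by rw [hdeg']; exact hcard)
      (fun a ha b hb hbi => by rw [hdeg', hdeg']; exact hmax a ha b hb hbi)
      hmeas
    exact ⟨G'', dec'', fun v => (hdeg'' v).trans (hdeg' v), hN''⟩

def delG {n : ℕ} (G : SimpleGraph (Fin n)) (i : Fin n) : SimpleGraph (Fin n) where
  Adj a b := G.Adj a b ∧ a ≠ i ∧ b ≠ i
  symm := by constructor; rintro a b ⟨h, h1, h2⟩; exact ⟨h.symm, h2, h1⟩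
  loopless := ⟨fun a h => G.loopless.irrefl a h.1⟩

instance delGdec {n : ℕ} (G : SimpleGraph (Fin n)) [DecidableRel G.Adj] (i : Fin n) :
    DecidableRel (delG G i).Adj := by
  intro a b; unfold delG; infer_instance

lemma delG_Ni {n : ℕ} (G : SimpleGraph (Fin n)) [DecidableRel G.Adj] (i : Fin n) :
    (delG G i).neighborFinset i = ∅ := by
  ext w; simp [mem_neighborFinset]; simp [delG]

lemma delG_Nv {n : ℕ} (G : SimpleGraph (Fin n)) [DecidableRel G.Adj] (i v : Fin n)
    (hvi : v ≠ i) : (delG G i).neighborFinset v = (G.neighborFinset v).erase i := by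
  ext w
  simp only [mem_neighborFinset, Finset.mem_erase]; simp only [delG]
  constructor
  · rintro ⟨h, _, h2⟩; exact ⟨h2, h⟩
  · rintro ⟨h2, h⟩; exact ⟨h, hvi, h2⟩

def addG {n : ℕ} (G : SimpleGraph (Fin n)) (i : Fin n) (S : Finset (Fin n))
    (hiS : i ∉ S) (hni : ∀ b, ¬ G.Adj i b) : SimpleGraph (Fin n) where
  Adj a b := G.Adj a b ∨ (a = i ∧ b ∈ S) ∨ (b = i ∧ a ∈ S)
  symm := by constructor; rintro a b (h | h | h); exacts [Or.inl h.symm, Or.inr (Or.inr h), Or.inr (Or.inl h)]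
  loopless := by
    constructor
    rintro a (h | ⟨rfl, h⟩ | ⟨rfl, h⟩)
    · exact G.loopless.irrefl a h
    · exact hiS h
    · exact hiS h

instance addGdec {n : ℕ} (G : SimpleGraph (Fin n)) [DecidableRel G.Adj] (i : Fin n)
    (S : Finset (Fin n)) (hiS : i ∉ S) (hni : ∀ b, ¬ G.Adj i b) :
    DecidableRel (addG G i S hiS hni).Adj := by
  intro a b; unfold addG; infer_instance

lemma addG_Ni {n : ℕ} (G : SimpleGraph (Fin n)) [DecidableRel G.Adj] (i : Fin n)
    (S : Finset (Fin n)) (hiS : i ∉ S) (hni : ∀ b, ¬ G.Adj i b) :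
    (addG G i S hiS hni).neighborFinset i = S := by
  ext w
  simp only [mem_neighborFinset]; simp only [addG]
  constructor
  · rintro (h | ⟨_, h⟩ | ⟨rfl, h⟩)
    · exact absurd h (hni w)
    · exact h
    · exact absurd h hiS
  · intro h; exact Or.inr (Or.inl ⟨trivial, h⟩)

lemma addG_NS {n : ℕ} (G : SimpleGraph (Fin n)) [DecidableRel G.Adj] (i : Fin n)
    (S : Finset (Fin n)) (hiS : i ∉ S) (hni : ∀ b, ¬ G.Adj i b) (v : Fin n) (hv : v ∈ S) :
    (addG G i S hiS hni).neighborFinset v = insert i (G.neighborFinset v) := by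
  have hvi : v ≠ i := fun h => hiS (h ▸ hv)
  ext w
  simp only [mem_neighborFinset, Finset.mem_insert]; simp only [addG]
  constructor
  · rintro (h | ⟨h, _⟩ | ⟨rfl, _⟩)
    · exact Or.inr h
    · exact absurd h hvi
    · exact Or.inl rfl
  · rintro (rfl | h)
    · tauto
    · exact Or.inl h

lemma addG_Nother {n : ℕ} (G : SimpleGraph (Fin n)) [DecidableRel G.Adj] (i : Fin n)
    (S : Finset (Fin n)) (hiS : i ∉ S) (hni : ∀ b, ¬ G.Adj i b) (v : Fin n)
    (hvi : v ≠ i) (hv : v ∉ S) :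
    (addG G i S hiS hni).neighborFinset v = G.neighborFinset v := by
  ext w
  simp only [mem_neighborFinset]; simp only [addG]
  constructor
  · rintro (h | ⟨h, _⟩ | ⟨_, h⟩)
    · exact h
    · exact absurd h hvi
    · exact absurd h hv
  · exact Or.inl

/-- Generalized Havel–Hakimi step with arbitrary hub: let `i` be any index with
`d i = Δ > 0`, and let `S` be a set of `Δ` vertices other than `i` of largest
degree (ties broken arbitrarily). Then `d` is graphical iff the sequence obtained
by zeroing the hub degree and decrementing the degrees of the vertices of `S` is
graphical. -/
theorem stmt7 {n : ℕ} (d : Fin n → ℤ) (hnn : ∀ j, 0 ≤ d j) (i : Fin n)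
    (hpos : 0 < d i) (S : Finset (Fin n)) (hiS : i ∉ S)
    (hcard : (S.card : ℤ) = d i)
    (hmax : ∀ j ∈ S, ∀ k, k ∉ S → k ≠ i → d k ≤ d j) :
    GraphicalZ d ↔
      GraphicalZ (fun j => if j = i then 0 else if j ∈ S then d j - 1 else d j) := by
  rw [gz_iff, gz_iff]
  constructor
  · rintro ⟨G, dec, hG⟩
    have hcardN : S.card = G.degree i := by
      have h := hG i
      have : (S.card : ℤ) = (G.degree i : ℤ) := hcard.trans h.symm
      exact_mod_cast this
    have hmaxN : ∀ j ∈ S, ∀ k, k ∉ S → k ≠ i → G.degree k ≤ G.degree j := by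
      intro j hj k hk hki
      have h1 := hG j; have h2 := hG k
      have h3 := hmax j hj k hk hki
      have : (G.degree k : ℤ) ≤ (G.degree j : ℤ) := by rw [h1, h2]; exact h3
      exact_mod_cast this
    obtain ⟨G'', dec'', hdeg, hNi⟩ := key_aux _ G dec i S hiS hcardN hmaxN rfl
    refine ⟨delG G'' i, inferInstance, ?_⟩
    intro v
    show _ = if v = i then 0 else if v ∈ S then d v - 1 else d v
    by_cases hvi : v = i
    · subst hvi
      rw [if_pos rfl, ← (delG G'' v).card_neighborFinset_eq_degree v, delG_Ni]
      simp
    · rw [if_neg hvi, ← (delG G'' i).card_neighborFinset_eq_degree v, delG_Nv G'' i v hvi]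
      by_cases hvS : v ∈ S
      · rw [if_pos hvS]
        have hvNi : v ∈ G''.neighborFinset i := hNi ▸ hvS
        have hiN : i ∈ G''.neighborFinset v :=
          (mem_neighborFinset G'' v i).mpr ((mem_neighborFinset G'' i v).mp hvNi).symm
        rw [Finset.card_erase_of_mem hiN, G''.card_neighborFinset_eq_degree v, hdeg v]
        have hpos1 : 1 ≤ G.degree v := by
          rw [← hdeg v, ← G''.card_neighborFinset_eq_degree v]
          exact Finset.card_pos.mpr ⟨i, hiN⟩
        rw [Nat.cast_sub hpos1, hG v]
        norm_num
      · rw [if_neg hvS]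
        have hvNi : v ∉ G''.neighborFinset i := fun h => hvS (hNi ▸ h)
        have hiN : i ∉ G''.neighborFinset v := fun h =>
          hvNi ((mem_neighborFinset G'' i v).mpr ((mem_neighborFinset G'' v i).mp h).symm)
        rw [Finset.erase_eq_of_notMem hiN, G''.card_neighborFinset_eq_degree v, hdeg v,
          hG v]
  · rintro ⟨G', dec', hG'⟩
    have hdi : G'.degree i = 0 := by
      have h := hG' i
      simp only [if_pos rfl, eq_self_iff_true, if_true] at h
      exact_mod_cast h
    have hNi : G'.neighborFinset i = ∅ := Finset.card_eq_zero.mp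
      (by rw [G'.card_neighborFinset_eq_degree i]; exact hdi)
    have hni : ∀ b, ¬ G'.Adj i b := fun b h => by
      have := (mem_neighborFinset G' i b).mpr h
      rw [hNi] at this
      exact absurd this (Finset.notMem_empty b)
    refine ⟨addG G' i S hiS hni, addGdec G' i S hiS hni, ?_⟩
    intro v
    by_cases hvi : v = i
    · subst hvi
      rw [← (addG G' v S hiS hni).card_neighborFinset_eq_degree v, addG_Ni]
      exact hcard
    · by_cases hvS : v ∈ S
      · rw [← (addG G' i S hiS hni).card_neighborFinset_eq_degree v,
          addG_NS G' i S hiS hni v hvS,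
          Finset.card_insert_of_notMem
            (fun h => hni v ((mem_neighborFinset G' v i).mp h).symm),
          G'.card_neighborFinset_eq_degree v]
        have h := hG' v
        simp only [if_neg hvi, if_pos hvS] at h
        push_cast
        omega
      · rw [← (addG G' i S hiS hni).card_neighborFinset_eq_degree v,
          addG_Nother G' i S hiS hni v hvi hvS, G'.card_neighborFinset_eq_degree v]
        have h := hG' v
        simp only [if_neg hvi, if_neg hvS] at h
        exact h
end

section
/- If (d_1,...,d_n) is a multigraphical sequence all of whose entries are positive satisfying (1/2)·Σ d_i ≥ n − 1 (potentially connected), and one edge is added between a vertex of maximum degree and a vertex of minimum positive degree (decrementing both degrees by 1), then the resulting sequence of nonzero remaining degrees is again potentially connected (or the construction is complete). -/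
/-- If `d` is a multigraphical sequence with all entries positive and half-sum
at least `n - 1` (potentially connected), and one edge is added between a vertex
`i` of maximum degree and a vertex `j` of minimum (positive) degree, decrementing
both, then either the construction is complete (all remaining degrees zero), or
the sequence of nonzero remaining degrees is again potentially connected. -/
theorem stmt9 {n : ℕ} (d : Fin n → ℕ)
    (hm : ∃ M : Multiset (Sym2 (Fin n)), (∀ e ∈ M, ¬ e.IsDiag) ∧ ∀ v, mdeg M v = d v)
    (hpos : ∀ v, 0 < d v) (hconn : 2 * (n - 1) ≤ ∑ v, d v)
    (i j : Fin n) (hij : i ≠ j) (hmax : ∀ v, d v ≤ d i) (hmin : ∀ v, d j ≤ d v) :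
    (∀ v, (if v = i ∨ v = j then d v - 1 else d v) = 0) ∨
      2 * ((Finset.univ.filter
            (fun v => (if v = i ∨ v = j then d v - 1 else d v) ≠ 0)).card - 1) ≤
        ∑ v, (if v = i ∨ v = j then d v - 1 else d v) := by
  classical
  right
  -- The sum drops by exactly 2.
  have hsum : (∑ v, (if v = i ∨ v = j then d v - 1 else d v)) + 2 = ∑ v, d v := by
    have key : ∀ v : Fin n,
        (if v = i ∨ v = j then d v - 1 else d v) + (if v = i ∨ v = j then 1 else 0) = d v := by
      intro v
      split
      · have := hpos v; omega
      · omega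
    calc (∑ v, (if v = i ∨ v = j then d v - 1 else d v)) + 2
        = (∑ v, (if v = i ∨ v = j then d v - 1 else d v))
          + ∑ v, (if v = i ∨ v = j then (1:ℕ) else 0) := by
          congr 1
          rw [Finset.sum_boole]
          have : (Finset.univ.filter (fun v : Fin n => v = i ∨ v = j)) = {i, j} := by
            ext v; simp
          rw [this, Finset.card_insert_of_notMem (by simp [hij]), Finset.card_singleton]
          norm_num
      _ = ∑ v, d v := by
          rw [← Finset.sum_add_distrib]
          exact Finset.sum_congr rfl fun v _ => key v
  set c := (Finset.univ.filter
      (fun v => (if v = i ∨ v = j then d v - 1 else d v) ≠ 0)).card with hc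
  rcases Nat.lt_or_ge (d j) 2 with hdj | hdj
  · -- min degree is 1, so j drops out and the count is at most n - 1
    have hdj1 : d j = 1 := by have := hpos j; omega
    have hcle : c ≤ n - 1 := by
      have hsub : (Finset.univ.filter
          (fun v => (if v = i ∨ v = j then d v - 1 else d v) ≠ 0)) ⊆
          Finset.univ.erase j := by
        intro v hv
        simp only [Finset.mem_filter] at hv
        refine Finset.mem_erase.mpr ⟨?_, Finset.mem_univ v⟩
        rintro rfl
        simp [hdj1] at hv
      have := Finset.card_le_card hsub
      simpa using this
    omega
  · -- all degrees ≥ 2, so the sum is ≥ 2n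
    have hbig : 2 * n ≤ ∑ v, d v := by
      calc 2 * n = ∑ _v : Fin n, 2 := by simp [mul_comm]
        _ ≤ ∑ v, d v := Finset.sum_le_sum fun v _ => le_trans hdj (hmin v)
    have hcle : c ≤ n := by
      have := Finset.card_filter_le (Finset.univ : Finset (Fin n))
        (fun v => (if v = i ∨ v = j then d v - 1 else d v) ≠ 0)
      simpa using this
    omega
end

section
/- Smallest-first Havel–Hakimi preserves potential connectedness: Let (d_1,...,d_n), n > 2, be a graphical sequence with all entries positive satisfying (1/2)·Σ d_i ≥ n − 1. Choose a vertex of minimum degree δ as hub and connect all its δ stubs to the δ largest-degree other vertices. Then the remaining sequence of nonzero degrees again has all entries positive and half-sum at least (number of remaining entries) − 1. -/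
/-- Smallest-first Havel–Hakimi preserves potential connectedness: let `d` be a
graphical sequence of length `n > 2` with all entries positive and half-sum at
least `n - 1`. Performing a Havel–Hakimi step with a minimum-degree hub `h`
(connecting its `d h` stubs to the `d h` largest-degree other vertices `S`),
the remaining sequence of nonzero degrees again has all entries positive and
half-sum at least (number of remaining entries) − 1. -/
theorem stmt10 {n : ℕ} (d : Fin n → ℕ) (hn : 2 < n) (hgr : Graphical d)
    (hpos : ∀ v, 0 < d v) (hconn : 2 * (n - 1) ≤ ∑ v, d v)
    (h : Fin n) (hmin : ∀ v, d h ≤ d v)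
    (S : Finset (Fin n)) (hhS : h ∉ S) (hcard : S.card = d h)
    (hSmax : ∀ j ∈ S, ∀ k, k ∉ S → k ≠ h → d k ≤ d j) :
    (∀ v ∈ Finset.univ.filter
        (fun v => (if v = h then 0 else if v ∈ S then d v - 1 else d v) ≠ 0),
      0 < (if v = h then 0 else if v ∈ S then d v - 1 else d v)) ∧
    2 * ((Finset.univ.filter
          (fun v => (if v = h then 0 else if v ∈ S then d v - 1 else d v) ≠ 0)).card - 1) ≤
      ∑ v, (if v = h then 0 else if v ∈ S then d v - 1 else d v) := by
  classical
  constructor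
  · intro v hv
    simp only [Finset.mem_filter] at hv
    exact Nat.pos_of_ne_zero hv.2
  -- sum of auxiliary function
  have hg : ∑ v, (if v = h then d h else if v ∈ S then 1 else 0) = 2 * d h := by
    have hpt : ∀ v : Fin n, (if v = h then d h else if v ∈ S then 1 else 0)
        = (if v = h then d h else 0) + (if v ∈ S then 1 else 0) := by
      intro v
      by_cases hv : v = h
      · subst hv; simp [hhS]
      · simp [hv]
    rw [Finset.sum_congr rfl (fun v _ => hpt v), Finset.sum_add_distrib]
    rw [Finset.sum_ite_eq' Finset.univ h (fun _ => d h)]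
    have : (∑ v : Fin n, if v ∈ S then (1:ℕ) else 0) = S.card := by
      rw [Finset.sum_ite_mem, Finset.univ_inter, Finset.card_eq_sum_ones]
    simp [this, hcard]
    ring
  have hsum : (∑ v, (if v = h then 0 else if v ∈ S then d v - 1 else d v)) + 2 * d h
      = ∑ v, d v := by
    rw [← hg, ← Finset.sum_add_distrib]
    apply Finset.sum_congr rfl
    intro v _
    by_cases hv : v = h
    · simp [hv]
    · by_cases hvS : v ∈ S
      · have := hpos v; simp only [hv, hvS, if_false, if_true]; omega
      · simp [hv, hvS]
  -- cardinality
  set Z : Finset (Fin n) := S.filter (fun v => d v = 1) with hZ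
  have hZS : Z.card ≤ S.card := Finset.card_le_card (Finset.filter_subset _ _)
  have hcardT : (Finset.univ.filter
      (fun v => (if v = h then 0 else if v ∈ S then d v - 1 else d v) ≠ 0)).card
      + (1 + Z.card) = n := by
    have hcompl : Finset.univ.filter
        (fun v => ¬ ((if v = h then 0 else if v ∈ S then d v - 1 else d v) ≠ 0))
        = insert h Z := by
      ext v
      simp only [Finset.mem_filter, Finset.mem_univ, true_and, not_not,
        Finset.mem_insert, hZ, Finset.mem_filter]
      by_cases hv : v = h
      · simp [hv]
      · simp only [hv, if_false, false_or]
        by_cases hvS : v ∈ S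
        · have := hpos v; simp only [hvS, if_true, true_and]; omega
        · have := hpos v; simp only [hvS, if_false, false_and, iff_false]; omega
    have hins : (insert h Z).card = 1 + Z.card := by
      rw [Finset.card_insert_of_notMem]
      · ring
      · intro hc; exact hhS (Finset.mem_filter.mp hc).1
    have := Finset.card_filter_add_card_filter_not
      (s := (Finset.univ : Finset (Fin n)))
      (p := fun v => (if v = h then 0 else if v ∈ S then d v - 1 else d v) ≠ 0)
    rw [hcompl, hins] at this
    simpa using this
  -- key case split
  have hkey : d h = 1 ∨ 2 * n - 4 + 2 * d h ≤ ∑ v, d v := by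
    rcases Nat.lt_or_ge (d h) 2 with h1 | h2
    · left; have := hpos h; omega
    · right
      have hge : n * d h ≤ ∑ v, d v := by
        calc n * d h = ∑ _v : Fin n, d h := by simp [Finset.sum_const, mul_comm]
        _ ≤ ∑ v, d v := Finset.sum_le_sum (fun v _ => hmin v)
      obtain ⟨a, ha⟩ : ∃ a, n = a + 3 := ⟨n - 3, by omega⟩
      obtain ⟨b, hb⟩ : ∃ b, d h = b + 2 := ⟨d h - 2, by omega⟩
      have heq : 2 * n - 4 + 2 * d h = 2 * a + 2 * b + 6 := by omega
      rw [heq]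
      have hexp : (a + 3) * (b + 2) = a * b + 2 * a + 3 * b + 6 := by ring
      have hge' : a * b + 2 * a + 3 * b + 6 ≤ ∑ v, d v := by
        rw [← hexp, ← ha, ← hb]; exact hge
      linarith [Nat.zero_le (a * b)]
  have hZcard : Z.card ≤ d h := by omega
  have hZ1 : Z.card = 0 ∨ d h = 1 → True := fun _ => trivial
  -- if d h = 1 then Z.card ≤ 1
  omega
end

section
/- If a potentially connected sequence (all entries positive, half-sum ≥ n − 1) of length n > 2 undergoes a smallest-first Havel–Hakimi step, then the number of vertices with nonzero remaining degree decreases by exactly one. -/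
/-- If a potentially connected sequence (all entries positive, half-sum at least
`n - 1`) of length `n > 2` undergoes a smallest-first Havel–Hakimi step (hub `h`
of minimum degree connected to the `d h` largest-degree other vertices `S`),
then the number of vertices with nonzero remaining degree is exactly `n - 1`:
it decreases by exactly one. -/
theorem stmt11 {n : ℕ} (d : Fin n → ℕ) (hn : 2 < n)
    (hpos : ∀ v, 0 < d v) (hconn : 2 * (n - 1) ≤ ∑ v, d v)
    (h : Fin n) (hmin : ∀ v, d h ≤ d v)
    (S : Finset (Fin n)) (hhS : h ∉ S) (hcard : S.card = d h)
    (hSmax : ∀ j ∈ S, ∀ k, k ∉ S → k ≠ h → d k ≤ d j) :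
    (Finset.univ.filter
        (fun v => (if v = h then 0 else if v ∈ S then d v - 1 else d v) ≠ 0)).card
      = n - 1 := by
  have hS2 : ∀ v ∈ S, 2 ≤ d v := by
    by_contra hc
    push_neg at hc
    obtain ⟨j, hjS, hj2⟩ := hc
    have hdj : d j = 1 := by have := hpos j; omega
    have hdh : d h = 1 := by have := hmin j; have := hpos h; omega
    have hScard : S.card = 1 := by rw [hcard, hdh]
    obtain ⟨a, ha⟩ := Finset.card_eq_one.mp hScard
    have hja : j = a := by rw [ha] at hjS; simpa using hjS
    have hall : ∀ k, d k ≤ 1 := by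
      intro k
      by_cases hkh : k = h
      · rw [hkh, hdh]
      · by_cases hkS : k ∈ S
        · rw [ha] at hkS; simp at hkS; rw [hkS, ← hja, hdj]
        · calc d k ≤ d j := hSmax j hjS k hkS hkh
            _ = 1 := hdj
    have hsum : ∑ v, d v ≤ n := by
      calc ∑ v, d v ≤ ∑ _v : Fin n, 1 := Finset.sum_le_sum fun v _ => hall v
        _ = n := by simp
    omega
  have hset : Finset.univ.filter
      (fun v => (if v = h then 0 else if v ∈ S then d v - 1 else d v) ≠ 0) = {h}ᶜ := by
    ext v
    simp only [Finset.mem_filter, Finset.mem_univ, true_and, Finset.mem_compl,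
      Finset.mem_singleton]
    by_cases hvh : v = h
    · simp [hvh]
    · by_cases hvS : v ∈ S
      · have := hS2 v hvS; simp [hvh, hvS]; omega
      · simp [hvh, hvS, (hpos v).ne']
  rw [hset, Finset.card_compl, Finset.card_singleton, Fintype.card_fin]
end

section
/- Star-constrained graphicality: Let d_1 = Δ ≥ d_2 ≥ ... ≥ d_n be a degree sequence and X ⊆ {2,...,n} a set of forbidden neighbours for vertex 1 with |X| ≤ n − 1 − Δ. Connect vertex 1 to the Δ largest-degree vertices not in X, obtaining a remaining sequence d'. Then there exists a simple realization of (d_1,...,d_n) in which vertex 1 has no neighbour in X if and only if d' is graphical. -/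
open SimpleGraph Finset


private lemma ncard_nf {V : Type*} [Fintype V] (G : SimpleGraph V) [DecidableRel G.Adj] (v : V) :
    (G.neighborSet v).ncard = (G.neighborFinset v).card := by
  rw [SimpleGraph.neighborFinset_def, Set.ncard_eq_toFinset_card']


private lemma switch_exists {n : ℕ} (G : SimpleGraph (Fin (n+1))) [DecidableRel G.Adj]
    (a b c : Fin (n+1))
    (hadj0a : G.Adj 0 a) (hnadj0b : ¬ G.Adj 0 b) (hbc : G.Adj b c)
    (hnac : ¬ G.Adj a c) (hca : c ≠ a) (hc0 : c ≠ 0) (hb0 : b ≠ 0) (hab : a ≠ b) :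
    ∃ (G' : SimpleGraph (Fin (n+1))) (_ : DecidableRel G'.Adj),
      G'.neighborFinset 0 = insert b ((G.neighborFinset 0).erase a) ∧
      (∀ v, (G'.neighborFinset v).card = (G.neighborFinset v).card) := by
  have ha0 : a ≠ 0 := hadj0a.ne'
  have hbc' : b ≠ c := hbc.ne
  let adj' : Fin (n+1) → Fin (n+1) → Prop := fun u v =>
    (G.Adj u v ∧ s(u,v) ≠ s(0,a) ∧ s(u,v) ≠ s(b,c)) ∨ s(u,v) = s(0,b) ∨ s(u,v) = s(a,c)
  have hsym : Symmetric adj' := by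
    intro u v h
    have e : s(v,u) = s(u,v) := Sym2.eq_swap
    simp only [adj'] at h ⊢
    rw [e, G.adj_comm]
    exact h
  have hloop : Irreflexive adj' := by
    intro v h
    rcases h with ⟨h1, -, -⟩ | h | h
    · exact G.irrefl h1
    · rw [Sym2.eq_iff] at h
      rcases h with ⟨h1, h2⟩ | ⟨h1, h2⟩
      · exact hb0 (h2.symm.trans h1)
      · exact hb0 (h1.symm.trans h2)
    · rw [Sym2.eq_iff] at h
      rcases h with ⟨h1, h2⟩ | ⟨h1, h2⟩
      · exact hca (h2.symm.trans h1)
      · exact hca (h1.symm.trans h2)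
  let G' : SimpleGraph (Fin (n+1)) := ⟨adj', ⟨fun u v h => hsym h⟩, ⟨fun v => hloop v⟩⟩
  haveI instG' : DecidableRel G'.Adj := fun u v => Classical.dec _
  have hmem : ∀ u v, G'.Adj u v ↔
      ((G.Adj u v ∧ s(u,v) ≠ s(0,a) ∧ s(u,v) ≠ s(b,c)) ∨ s(u,v) = s(0,b) ∨ s(u,v) = s(a,c)) :=
    fun _ _ => Iff.rfl
  have hN0 : G'.neighborFinset 0 = insert b ((G.neighborFinset 0).erase a) := by
    ext u
    rw [mem_neighborFinset, hmem]
    simp [Sym2.eq_iff, ha0, hb0, hc0, hca, hab, hbc',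
      Ne.symm ha0, Ne.symm hb0, Ne.symm hc0, Ne.symm hca, Ne.symm hab, Ne.symm hbc']
    tauto
  have hNa : G'.neighborFinset a = insert c ((G.neighborFinset a).erase 0) := by
    ext u
    rw [mem_neighborFinset, hmem]
    simp [Sym2.eq_iff, ha0, hb0, hc0, hca, hab, hbc',
      Ne.symm ha0, Ne.symm hb0, Ne.symm hc0, Ne.symm hca, Ne.symm hab, Ne.symm hbc']
    tauto
  have hNb : G'.neighborFinset b = insert 0 ((G.neighborFinset b).erase c) := by
    ext u
    rw [mem_neighborFinset, hmem]
    simp [Sym2.eq_iff, ha0, hb0, hc0, hca, hab, hbc',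
      Ne.symm ha0, Ne.symm hb0, Ne.symm hc0, Ne.symm hca, Ne.symm hab, Ne.symm hbc']
    tauto
  have hNc : G'.neighborFinset c = insert a ((G.neighborFinset c).erase b) := by
    ext u
    rw [mem_neighborFinset, hmem]
    simp [Sym2.eq_iff, ha0, hb0, hc0, hca, hab, hbc',
      Ne.symm ha0, Ne.symm hb0, Ne.symm hc0, Ne.symm hca, Ne.symm hab, Ne.symm hbc']
    tauto
  have hNo : ∀ v, v ≠ 0 → v ≠ a → v ≠ b → v ≠ c →
      G'.neighborFinset v = G.neighborFinset v := by
    intro v hv0 hva hvb hvc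
    ext u
    rw [mem_neighborFinset, hmem]
    simp [Sym2.eq_iff, hv0, hva, hvb, hvc]
  refine ⟨G', instG', hN0, ?_⟩
  intro v
  by_cases hv0 : v = 0
  · subst hv0
    have haN : a ∈ G.neighborFinset (0 : Fin (n+1)) := (mem_neighborFinset _ _ _).2 hadj0a
    have hbN : b ∉ (G.neighborFinset (0 : Fin (n+1))).erase a := fun h =>
      hnadj0b ((mem_neighborFinset _ _ _).1 (Finset.mem_erase.1 h).2)
    rw [hN0, Finset.card_insert_of_notMem hbN, Finset.card_erase_of_mem haN]
    have : 1 ≤ (G.neighborFinset (0 : Fin (n+1))).card := Finset.card_pos.2 ⟨a, haN⟩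
    omega
  · by_cases hva : v = a
    · subst hva
      have hcN : c ∉ (G.neighborFinset v).erase 0 := fun h =>
        hnac ((mem_neighborFinset _ _ _).1 (Finset.mem_erase.1 h).2)
      have h0N : (0 : Fin (n+1)) ∈ G.neighborFinset v :=
        (mem_neighborFinset _ _ _).2 hadj0a.symm
      rw [hNa, Finset.card_insert_of_notMem hcN, Finset.card_erase_of_mem h0N]
      have : 1 ≤ (G.neighborFinset v).card := Finset.card_pos.2 ⟨0, h0N⟩
      omega
    · by_cases hvb : v = b
      · subst hvb
        have h0N : (0 : Fin (n+1)) ∉ (G.neighborFinset v).erase c := fun h =>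
          hnadj0b (((mem_neighborFinset _ _ _).1 (Finset.mem_erase.1 h).2).symm)
        have hcN : c ∈ G.neighborFinset v := (mem_neighborFinset _ _ _).2 hbc
        rw [hNb, Finset.card_insert_of_notMem h0N, Finset.card_erase_of_mem hcN]
        have : 1 ≤ (G.neighborFinset v).card := Finset.card_pos.2 ⟨c, hcN⟩
        omega
      · by_cases hvc : v = c
        · subst hvc
          have haN' : a ∉ (G.neighborFinset v).erase b := fun h =>
            hnac (((mem_neighborFinset _ _ _).1 (Finset.mem_erase.1 h).2).symm)
          have hbN' : b ∈ G.neighborFinset v := (mem_neighborFinset _ _ _).2 hbc.symm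
          rw [hNc, Finset.card_insert_of_notMem haN', Finset.card_erase_of_mem hbN']
          have : 1 ≤ (G.neighborFinset v).card := Finset.card_pos.2 ⟨b, hbN'⟩
          omega
        · rw [hNo v hv0 hva hvb hvc]

private lemma reach {n : ℕ} (d : Fin (n+1) → ℤ) (X B : Finset (Fin (n+1)))
    (h0B : 0 ∉ B) (hBX : Disjoint B X)
    (hBmax : ∀ j ∈ B, ∀ k, k ∉ B → k ∉ X → k ≠ 0 → d k ≤ d j) :
    ∀ m (G : SimpleGraph (Fin (n+1))) [DecidableRel G.Adj],
      (∀ v, ((G.neighborFinset v).card : ℤ) = d v) → (∀ x ∈ X, ¬ G.Adj 0 x) →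
      B.card = (G.neighborFinset 0).card →
      (B \ G.neighborFinset 0).card ≤ m →
      ∃ G' : SimpleGraph (Fin (n+1)),
        (∀ v, ((G'.neighborSet v).ncard : ℤ) = d v) ∧ (∀ u, G'.Adj 0 u ↔ u ∈ B) := by
  intro m
  induction m with
  | zero =>
    intro G instG hdeg havoid hcard hm
    have hsub : B ⊆ G.neighborFinset 0 := by
      rw [← Finset.sdiff_eq_empty_iff_subset]
      exact Finset.card_eq_zero.1 (Nat.le_zero.1 hm)
    have hEq : G.neighborFinset 0 = B := (Finset.eq_of_subset_of_card_le hsub hcard.ge).symm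
    refine ⟨G, fun v => ?_, fun u => ?_⟩
    · rw [ncard_nf]; exact hdeg v
    · rw [← mem_neighborFinset, hEq]
  | succ m ih =>
    intro G instG hdeg havoid hcard hm
    by_cases hsub : B ⊆ G.neighborFinset 0
    · have hEq : G.neighborFinset 0 = B := (Finset.eq_of_subset_of_card_le hsub hcard.ge).symm
      refine ⟨G, fun v => ?_, fun u => ?_⟩
      · rw [ncard_nf]; exact hdeg v
      · rw [← mem_neighborFinset, hEq]
    obtain ⟨b, hbB, hbN⟩ : ∃ b ∈ B, b ∉ G.neighborFinset 0 := by
      by_contra h; push_neg at h; exact hsub h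
    obtain ⟨a, haN, haB⟩ : ∃ a ∈ G.neighborFinset 0, a ∉ B := by
      by_contra h; push_neg at h
      have : G.neighborFinset 0 = B := Finset.eq_of_subset_of_card_le h hcard.le
      exact hbN (this ▸ hbB)
    have hadj0a : G.Adj 0 a := (mem_neighborFinset _ _ _).1 haN
    have hnadj0b : ¬ G.Adj 0 b := fun h => hbN ((mem_neighborFinset _ _ _).2 h)
    have ha0 : a ≠ 0 := hadj0a.ne'
    have hb0 : b ≠ 0 := fun h => h0B (h ▸ hbB)
    have haX : a ∉ X := fun h => havoid a h hadj0a
    have hab : a ≠ b := fun h => haB (by rw [h]; exact hbB)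
    have hdab : d a ≤ d b := hBmax b hbB a haB haX ha0
    have hdeg_ab : (G.neighborFinset a).card ≤ (G.neighborFinset b).card := by
      have := (hdeg a).trans_le (hdab.trans_eq (hdeg b).symm)
      exact_mod_cast this
    obtain ⟨c, hbc, hnac, hca, hc0⟩ : ∃ c, G.Adj b c ∧ ¬ G.Adj a c ∧ c ≠ a ∧ c ≠ 0 := by
      by_contra h; push_neg at h
      have hsubS : (G.neighborFinset b).erase a ⊆ ((G.neighborFinset a).erase 0).erase b := by
        intro c hc
        obtain ⟨hca, hcb⟩ := Finset.mem_erase.1 hc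
        have hbc : G.Adj b c := (mem_neighborFinset _ _ _).1 hcb
        have hc0 : c ≠ 0 := by rintro rfl; exact hnadj0b hbc.symm
        by_cases hac : G.Adj a c
        · exact Finset.mem_erase.2
            ⟨hbc.ne', Finset.mem_erase.2 ⟨hc0, (mem_neighborFinset _ _ _).2 hac⟩⟩
        · exact absurd (h c hbc hac hca) hc0
      have hle := Finset.card_le_card hsubS
      have h0a : (0 : Fin (n+1)) ∈ G.neighborFinset a := (mem_neighborFinset _ _ _).2 hadj0a.symm
      have he0 : ((G.neighborFinset a).erase 0).card = (G.neighborFinset a).card - 1 :=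
        Finset.card_erase_of_mem h0a
      have hapos : 1 ≤ (G.neighborFinset a).card := Finset.card_pos.2 ⟨0, h0a⟩
      by_cases hadjab : G.Adj b a
      · have haNb : a ∈ G.neighborFinset b := (mem_neighborFinset _ _ _).2 hadjab
        have hbNa : b ∈ (G.neighborFinset a).erase 0 :=
          Finset.mem_erase.2 ⟨hb0, (mem_neighborFinset _ _ _).2 hadjab.symm⟩
        have h1 : ((G.neighborFinset b).erase a).card = (G.neighborFinset b).card - 1 :=
          Finset.card_erase_of_mem haNb
        have h2 : (((G.neighborFinset a).erase 0).erase b).card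
            = ((G.neighborFinset a).erase 0).card - 1 := Finset.card_erase_of_mem hbNa
        have hbpos : 1 ≤ (G.neighborFinset b).card := Finset.card_pos.2 ⟨a, haNb⟩
        have h2pos : 1 ≤ ((G.neighborFinset a).erase 0).card := Finset.card_pos.2 ⟨b, hbNa⟩
        omega
      · have haNb : a ∉ G.neighborFinset b := fun h' => hadjab ((mem_neighborFinset _ _ _).1 h')
        have hbNa : b ∉ (G.neighborFinset a).erase 0 := fun h' =>
          hadjab (((mem_neighborFinset _ _ _).1 (Finset.mem_erase.1 h').2).symm)
        rw [Finset.erase_eq_of_notMem haNb, Finset.erase_eq_of_notMem hbNa] at hle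
        omega
    obtain ⟨G', instG', hN0, hpres⟩ :=
      switch_exists G a b c hadj0a hnadj0b hbc hnac hca hc0 hb0 hab
    have hdeg' : ∀ v, ((G'.neighborFinset v).card : ℤ) = d v := by
      intro v; rw [hpres v]; exact hdeg v
    have havoid' : ∀ x ∈ X, ¬ G'.Adj 0 x := by
      intro x hxX hadj
      have : x ∈ G'.neighborFinset 0 := (mem_neighborFinset _ _ _).2 hadj
      rw [hN0] at this
      rcases Finset.mem_insert.1 this with rfl | h
      · exact (Finset.disjoint_left.1 hBX hbB) hxX
      · exact havoid x hxX ((mem_neighborFinset _ _ _).1 (Finset.mem_erase.1 h).2)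
    have hcard' : B.card = (G'.neighborFinset 0).card := by rw [hpres 0]; exact hcard
    have hm' : (B \ G'.neighborFinset 0).card ≤ m := by
      have hss : B \ G'.neighborFinset 0 ⊆ (B \ G.neighborFinset 0).erase b := by
        intro v hv
        obtain ⟨hvB, hvN⟩ := Finset.mem_sdiff.1 hv
        rw [hN0] at hvN
        have hvb : v ≠ b := fun h => hvN (by rw [h]; exact Finset.mem_insert_self b _)
        refine Finset.mem_erase.2 ⟨hvb, Finset.mem_sdiff.2 ⟨hvB, fun hvN0 => ?_⟩⟩
        have hva : v ≠ a := fun h => haB (h ▸ hvB)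
        exact hvN (Finset.mem_insert.2 (Or.inr (Finset.mem_erase.2 ⟨hva, hvN0⟩)))
      have hmemb : b ∈ B \ G.neighborFinset 0 := Finset.mem_sdiff.2 ⟨hbB, hbN⟩
      have h1 := Finset.card_le_card hss
      have h2 : ((B \ G.neighborFinset 0).erase b).card = (B \ G.neighborFinset 0).card - 1 :=
        Finset.card_erase_of_mem hmemb
      have h3 : 1 ≤ (B \ G.neighborFinset 0).card := Finset.card_pos.2 ⟨b, hmemb⟩
      omega
    exact ih G' hdeg' havoid' hcard' hm'

/-- Star-constrained graphicality: let `d 0 = Δ ≥ d 1 ≥ ... ≥ d n` be a degree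
sequence and `X` a set of forbidden neighbours for vertex `0` with
`|X| ≤ n - Δ`. Let `B` be a set of `Δ` largest-degree vertices other than `0`
and outside `X` (ties broken arbitrarily). There is a simple realization of `d`
in which vertex `0` has no neighbour in `X` iff the remaining sequence, obtained
by zeroing the hub degree and decrementing the degrees of `B`, is graphical. -/
theorem stmt14 {n : ℕ} (d : Fin (n + 1) → ℤ) (hnn : ∀ i, 0 ≤ d i)
    (hsort : ∀ i j : Fin (n + 1), i ≤ j → d j ≤ d i)
    (X : Finset (Fin (n + 1))) (h0X : 0 ∉ X) (hX : (X.card : ℤ) ≤ (n : ℤ) - d 0)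
    (B : Finset (Fin (n + 1))) (h0B : 0 ∉ B) (hBX : Disjoint B X)
    (hBcard : (B.card : ℤ) = d 0)
    (hBmax : ∀ j ∈ B, ∀ k, k ∉ B → k ∉ X → k ≠ 0 → d k ≤ d j) :
    (∃ G : SimpleGraph (Fin (n + 1)),
        (∀ v, ((G.neighborSet v).ncard : ℤ) = d v) ∧ ∀ x ∈ X, ¬ G.Adj 0 x) ↔
      GraphicalZ (fun v => if v = 0 then 0 else if v ∈ B then d v - 1 else d v) := by
  constructor
  · rintro ⟨G, hdeg, havoid⟩
    haveI instG : DecidableRel G.Adj := fun u v => Classical.dec _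
    have hdeg1 : ∀ v, ((G.neighborFinset v).card : ℤ) = d v := by
      intro v; rw [← ncard_nf]; exact hdeg v
    have hcard : B.card = (G.neighborFinset 0).card := by
      have h1 := hdeg1 0
      rw [← hBcard] at h1
      exact_mod_cast h1.symm
    obtain ⟨G', hdeg2, hAdjB⟩ :=
      reach d X B h0B hBX hBmax (B \ G.neighborFinset 0).card G hdeg1 havoid hcard le_rfl
    haveI instG' : DecidableRel G'.Adj := fun u v => Classical.dec _
    have hdeg2' : ∀ v, ((G'.neighborFinset v).card : ℤ) = d v := by
      intro v; rw [← ncard_nf]; exact hdeg2 v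
    let adj2 : Fin (n+1) → Fin (n+1) → Prop := fun u v => G'.Adj u v ∧ u ≠ 0 ∧ v ≠ 0
    have hsym2 : Symmetric adj2 := fun u v h => ⟨h.1.symm, h.2.2, h.2.1⟩
    have hloop2 : Irreflexive adj2 := fun v h => G'.irrefl h.1
    let G2 : SimpleGraph (Fin (n+1)) := ⟨adj2, ⟨fun u v h => hsym2 h⟩, ⟨fun v => hloop2 v⟩⟩
    haveI instG2 : DecidableRel G2.Adj := fun u v => Classical.dec _
    refine ⟨G2, fun v => ?_⟩
    show ((G2.neighborSet v).ncard : ℤ) = if v = 0 then 0 else if v ∈ B then d v - 1 else d v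
    rw [ncard_nf]
    by_cases hv0 : v = 0
    · subst hv0
      have hempty : G2.neighborFinset (0 : Fin (n+1)) = ∅ := by
        ext u
        simp only [mem_neighborFinset, Finset.notMem_empty, iff_false]
        exact fun h => h.2.1 rfl
      rw [hempty]
      simp
    · have hN2 : G2.neighborFinset v = (G'.neighborFinset v).erase 0 := by
        ext u
        rw [mem_neighborFinset, Finset.mem_erase, mem_neighborFinset]
        exact ⟨fun h => ⟨h.2.2, h.1⟩, fun h => ⟨h.2, hv0, h.1⟩⟩
      by_cases hvB : v ∈ B
      · have h0N : (0 : Fin (n+1)) ∈ G'.neighborFinset v := by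
          rw [mem_neighborFinset]
          exact ((hAdjB v).2 hvB).symm
        have hk1 : 1 ≤ (G'.neighborFinset v).card := Finset.card_pos.2 ⟨0, h0N⟩
        rw [hN2, Finset.card_erase_of_mem h0N, Nat.cast_sub hk1, hdeg2' v]
        simp [hv0, hvB]
      · have h0N : (0 : Fin (n+1)) ∉ G'.neighborFinset v := by
          rw [mem_neighborFinset]
          exact fun h => hvB ((hAdjB v).1 h.symm)
        rw [hN2, Finset.erase_eq_of_notMem h0N, hdeg2' v]
        simp [hv0, hvB]
  · rintro ⟨G', hd'⟩
    haveI instG' : DecidableRel G'.Adj := fun u v => Classical.dec _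
    have h00 : (G'.neighborSet 0).ncard = 0 := by
      have h1 := hd' 0
      simp at h1
      exact_mod_cast h1
    have hiso : ∀ u, ¬ G'.Adj 0 u := by
      intro u hu
      have hne : (G'.neighborSet 0).Nonempty := ⟨u, hu⟩
      rw [← Set.ncard_pos (Set.toFinite _)] at hne
      omega
    let adj : Fin (n+1) → Fin (n+1) → Prop := fun u v =>
      G'.Adj u v ∨ (u = 0 ∧ v ∈ B) ∨ (v = 0 ∧ u ∈ B)
    have hsym : Symmetric adj := by
      rintro u v (h | ⟨h1, h2⟩ | ⟨h1, h2⟩)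
      · exact Or.inl h.symm
      · exact Or.inr (Or.inr ⟨h1, h2⟩)
      · exact Or.inr (Or.inl ⟨h1, h2⟩)
    have hloop : Irreflexive adj := by
      rintro v (h | ⟨h1, h2⟩ | ⟨h1, h2⟩)
      · exact G'.irrefl h
      · exact h0B (h1 ▸ h2)
      · exact h0B (h1 ▸ h2)
    let G : SimpleGraph (Fin (n+1)) := ⟨adj, ⟨fun u v h => hsym h⟩, ⟨fun v => hloop v⟩⟩
    haveI instG : DecidableRel G.Adj := fun u v => Classical.dec _
    have hN0 : G.neighborFinset 0 = B := by
      ext u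
      rw [mem_neighborFinset]
      constructor
      · rintro (h | ⟨-, h⟩ | ⟨h1, h2⟩)
        · exact (hiso u h).elim
        · exact h
        · exact (h0B h2).elim
      · exact fun h => Or.inr (Or.inl ⟨rfl, h⟩)
    refine ⟨G, fun v => ?_, fun x hxX hadj => ?_⟩
    · rw [ncard_nf]
      by_cases hv0 : v = 0
      · subst hv0
        rw [hN0, hBcard]
      · have hvd := hd' v
        simp only [if_neg hv0] at hvd
        by_cases hvB : v ∈ B
        · have hNb : G.neighborFinset v = insert 0 (G'.neighborFinset v) := by
            ext u
            rw [mem_neighborFinset, Finset.mem_insert, mem_neighborFinset]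
            constructor
            · rintro (h | ⟨h1, -⟩ | ⟨h1, -⟩)
              · exact Or.inr h
              · exact (hv0 h1).elim
              · exact Or.inl h1
            · rintro (rfl | h)
              · exact Or.inr (Or.inr ⟨rfl, hvB⟩)
              · exact Or.inl h
          have h0N : (0 : Fin (n+1)) ∉ G'.neighborFinset v := fun h =>
            hiso v ((mem_neighborFinset _ _ _).1 h).symm
          rw [hNb, Finset.card_insert_of_notMem h0N]
          rw [if_pos hvB] at hvd
          rw [ncard_nf] at hvd
          push_cast
          omega
        · have hNv : G.neighborFinset v = G'.neighborFinset v := by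
            ext u
            rw [mem_neighborFinset, mem_neighborFinset]
            constructor
            · rintro (h | ⟨h1, -⟩ | ⟨-, h2⟩)
              · exact h
              · exact (hv0 h1).elim
              · exact (hvB h2).elim
            · exact fun h => Or.inl h
          rw [hNv, ← ncard_nf]
          rw [if_neg hvB] at hvd
          exact hvd
    · have hx : x ∈ G.neighborFinset 0 := (mem_neighborFinset _ _ _).2 hadj
      rw [hN0] at hx
      exact (Finset.disjoint_left.1 hBX hx) hxX
end

section
/- Threshold property of star-constrained graphicality: with notation as in the star-constrained graphicality theorem, there is a threshold degree d_th such that connecting a stub of the hub vertex to an allowed vertex of remaining degree d preserves the possibility of completing a simple realization if and only if d ≥ d_th. Formally: if connecting the hub to an allowed vertex v preserves graphicality of the residual constrained sequence, then connecting it instead to any allowed vertex of remaining degree ≥ deg(v) also preserves it. -/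
/-- `StarGraphical d hub X`: the degree sequence `d` has a simple realization
in which `hub` has no neighbour in the exclusion set `X`. -/
def StarGraphical {n : ℕ} (d : Fin n → ℕ) (hub : Fin n) (X : Finset (Fin n)) : Prop :=
  ∃ G : SimpleGraph (Fin n),
    (∀ v, (G.neighborSet v).ncard = d v) ∧ ∀ x ∈ X, ¬ G.Adj hub x

/-- Switch: move one endpoint of edge `a–c` to get edge `b–c`. -/
lemma switch_lemma {n : ℕ} (G : SimpleGraph (Fin n)) (a b c : Fin n)
    (hac : G.Adj a c) (hbc : ¬ G.Adj b c) (hbc' : b ≠ c) (hab : a ≠ b) :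
    ∃ H : SimpleGraph (Fin n),
      H.neighborSet a = G.neighborSet a \ {c} ∧
      H.neighborSet b = insert c (G.neighborSet b) ∧
      H.neighborSet c = insert b (G.neighborSet c \ {a}) ∧
      ∀ x, x ≠ a → x ≠ b → x ≠ c → H.neighborSet x = G.neighborSet x := by
  have hac' : a ≠ c := hac.ne
  refine ⟨⟨fun x y => (G.Adj x y ∧ ¬((x = a ∧ y = c) ∨ (x = c ∧ y = a))) ∨
      ((x = b ∧ y = c) ∨ (x = c ∧ y = b)), ?_, ?_⟩, ?_, ?_, ?_, ?_⟩
  · refine ⟨fun x y h => ?_⟩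
    rcases h with ⟨h1, h2⟩ | h
    · exact Or.inl ⟨h1.symm, by tauto⟩
    · exact Or.inr (by tauto)
  · refine ⟨fun x h => ?_⟩
    rcases h with ⟨h1, _⟩ | h
    · exact G.irrefl h1
    · rcases h with ⟨h1, h2⟩ | ⟨h1, h2⟩ <;> exact hbc' (h1 ▸ h2 ▸ rfl)
  · ext y
    show (G.Adj a y ∧ ¬((a = a ∧ y = c) ∨ (a = c ∧ y = a))) ∨
      ((a = b ∧ y = c) ∨ (a = c ∧ y = b)) ↔ y ∈ G.neighborSet a \ {c}
    simp only [Set.mem_diff, Set.mem_singleton_iff, SimpleGraph.mem_neighborSet]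
    constructor
    · rintro (⟨h1, h2⟩ | (⟨h1, _⟩ | ⟨h1, _⟩))
      · exact ⟨h1, fun h => h2 (Or.inl ⟨trivial, h⟩)⟩
      · exact absurd h1 hab
      · exact absurd h1 hac'
    · rintro ⟨h1, h2⟩
      refine Or.inl ⟨h1, ?_⟩
      rintro (⟨_, h⟩ | ⟨h, _⟩)
      · exact h2 h
      · exact hac' h
  · ext y
    show (G.Adj b y ∧ ¬((b = a ∧ y = c) ∨ (b = c ∧ y = a))) ∨
      ((b = b ∧ y = c) ∨ (b = c ∧ y = b)) ↔ y ∈ insert c (G.neighborSet b)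
    simp only [Set.mem_insert_iff, SimpleGraph.mem_neighborSet]
    constructor
    · rintro (⟨h1, _⟩ | (⟨_, h⟩ | ⟨h, _⟩))
      · exact Or.inr h1
      · exact Or.inl h
      · exact absurd h hbc'
    · rintro (rfl | h)
      · exact Or.inr (Or.inl ⟨trivial, rfl⟩)
      · refine Or.inl ⟨h, ?_⟩
        rintro (⟨h1, _⟩ | ⟨h1, _⟩)
        · exact hab h1.symm
        · exact hbc' h1
  · ext y
    show (G.Adj c y ∧ ¬((c = a ∧ y = c) ∨ (c = c ∧ y = a))) ∨
      ((c = b ∧ y = c) ∨ (c = c ∧ y = b)) ↔ y ∈ insert b (G.neighborSet c \ {a})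
    simp only [Set.mem_insert_iff, Set.mem_diff, Set.mem_singleton_iff,
      SimpleGraph.mem_neighborSet]
    constructor
    · rintro (⟨h1, h2⟩ | (⟨h, _⟩ | ⟨_, h⟩))
      · exact Or.inr ⟨h1, fun h => h2 (Or.inr ⟨trivial, h⟩)⟩
      · exact absurd h (Ne.symm hbc')
      · exact Or.inl h
    · rintro (rfl | ⟨h1, h2⟩)
      · exact Or.inr (Or.inr ⟨trivial, rfl⟩)
      · refine Or.inl ⟨h1, ?_⟩
        rintro (⟨h, _⟩ | ⟨_, h⟩)
        · exact hac' h.symm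
        · exact h2 h
  · intro x hxa hxb hxc
    ext y
    show (G.Adj x y ∧ ¬((x = a ∧ y = c) ∨ (x = c ∧ y = a))) ∨
      ((x = b ∧ y = c) ∨ (x = c ∧ y = b)) ↔ y ∈ G.neighborSet x
    simp only [SimpleGraph.mem_neighborSet]
    constructor
    · rintro (⟨h1, _⟩ | (⟨h, _⟩ | ⟨h, _⟩))
      · exact h1
      · exact absurd h hxb
      · exact absurd h hxc
    · intro h
      refine Or.inl ⟨h, ?_⟩
      rintro (⟨h1, _⟩ | ⟨h1, _⟩)
      · exact hxa h1
      · exact hxc h1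

/-- Threshold property of star-constrained graphicality: if connecting a stub of
the hub to an allowed vertex `v` (decrementing both degrees and adding `v` to the
exclusion set) preserves star-constrained graphicality, then connecting it
instead to any allowed vertex `w` of remaining degree at least `d v` also
preserves it. -/
theorem stmt15 {n : ℕ} (d : Fin n → ℕ) (hub : Fin n) (X : Finset (Fin n))
    (hhX : hub ∉ X) (hhub : 0 < d hub) (v w : Fin n)
    (hvX : v ∉ X) (hvh : v ≠ hub) (hwX : w ∉ X) (hwh : w ≠ hub)
    (hvpos : 0 < d v) (hle : d v ≤ d w)
    (hv : StarGraphical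
        (fun z => if z = hub then d hub - 1 else if z = v then d v - 1 else d z)
        hub (insert v X)) :
    StarGraphical
        (fun z => if z = hub then d hub - 1 else if z = w then d w - 1 else d z)
        hub (insert w X) := by
  by_cases hwv : w = v
  · subst hwv; exact hv
  obtain ⟨G, hdeg, hX⟩ := hv
  have hGhv : ¬ G.Adj hub v := hX v (Finset.mem_insert_self v X)
  have hGX : ∀ x ∈ X, ¬ G.Adj hub x := fun x hx => hX x (Finset.mem_insert_of_mem hx)
  have hdh : (G.neighborSet hub).ncard = d hub - 1 := by simpa using hdeg hub
  have hdv : (G.neighborSet v).ncard = d v - 1 := by simpa [hvh] using hdeg v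
  have hdw : (G.neighborSet w).ncard = d w := by simpa [hwh, hwv] using hdeg w
  by_cases hGhw : G.Adj hub w
  · -- move the hub's edge from `w` to `v`
    obtain ⟨H, hHa, hHb, hHc, hHo⟩ :=
      switch_lemma G w v hub hGhw.symm (fun h => hGhv h.symm) hvh (Ne.symm (fun h => hwv h.symm))
    refine ⟨H, ?_, ?_⟩
    · intro z
      by_cases hz1 : z = hub
      · rw [hz1, hHc]
        have hv_not : v ∉ G.neighborSet hub \ {w} := by
          intro hmem
          exact hGhv hmem.1
        have hw_in : w ∈ G.neighborSet hub := hGhw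
        rw [Set.ncard_insert_of_notMem hv_not, Set.ncard_diff_singleton_of_mem hw_in, hdh]
        have : 0 < (G.neighborSet hub).ncard := by
          rw [Set.ncard_pos]; exact ⟨w, hw_in⟩
        simp only [eq_self_iff_true, if_true]
        omega
      · by_cases hz2 : z = w
        · rw [hz2, hHa]
          have : hub ∈ G.neighborSet w := hGhw.symm
          rw [Set.ncard_diff_singleton_of_mem this, hdw]
          simp [hwh]
        · by_cases hz3 : z = v
          · rw [hz3, hHb]
            have : hub ∉ G.neighborSet v := fun h => hGhv (SimpleGraph.Adj.symm h)
            rw [Set.ncard_insert_of_notMem this, hdv]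
            have hvw' : v ≠ w := fun h => hwv h.symm
            simp only [if_neg hvh, if_neg hvw']
            omega
          · rw [hHo z hz2 hz3 hz1]
            simpa [hz1, hz2, hz3] using hdeg z
    · intro x hx
      rw [← SimpleGraph.mem_neighborSet, hHc]
      rcases Finset.mem_insert.mp hx with rfl | hxX
      · rintro (h | h)
        · exact hwv h
        · exact h.2 rfl
      · rintro (h | h)
        · exact hvX (h ▸ hxX)
        · exact hGX x hxX h.1
  · -- find `z` adjacent to `w` but not to `v`, and switch the edge `w–z` to `v–z`
    have hsub : ∃ z, G.Adj w z ∧ ¬ G.Adj v z ∧ z ≠ v := by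
      by_contra hcon
      push_neg at hcon
      have hsubset : G.neighborSet w ⊆ insert v (G.neighborSet v) := by
        intro z hz
        by_cases hvz : G.Adj v z
        · exact Set.mem_insert_of_mem _ hvz
        · exact (hcon z hz hvz) ▸ Set.mem_insert _ _
      have hcard : (insert v (G.neighborSet v)).ncard ≤ (G.neighborSet w).ncard := by
        calc (insert v (G.neighborSet v)).ncard ≤ (G.neighborSet v).ncard + 1 :=
              Set.ncard_insert_le _ _
          _ = (d v - 1) + 1 := by rw [hdv]
          _ = d v := by omega
          _ ≤ d w := hle
          _ = (G.neighborSet w).ncard := hdw.symm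
      have heq : G.neighborSet w = insert v (G.neighborSet v) :=
        Set.eq_of_subset_of_ncard_le hsubset hcard
      have hvw : v ∈ G.neighborSet w := heq ▸ Set.mem_insert _ _
      have hwv' : w ∈ G.neighborSet v := (SimpleGraph.mem_neighborSet _ _ _).mpr
        ((SimpleGraph.mem_neighborSet _ _ _).mp hvw).symm
      have : w ∈ G.neighborSet w := heq ▸ Set.mem_insert_of_mem _ hwv'
      exact G.irrefl this
    obtain ⟨z, hwz, hvz, hzv⟩ := hsub
    have hzhub : z ≠ hub := by
      rintro rfl
      exact hGhw hwz.symm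
    have hzw : z ≠ w := fun h => G.irrefl (h ▸ hwz)
    obtain ⟨H, hHa, hHb, hHc, hHo⟩ :=
      switch_lemma G w v z hwz hvz (Ne.symm hzv) (Ne.symm (fun h => hwv h.symm))
    refine ⟨H, ?_, ?_⟩
    · intro y
      by_cases hy1 : y = w
      · rw [hy1, hHa]
        have : z ∈ G.neighborSet w := hwz
        rw [Set.ncard_diff_singleton_of_mem this, hdw]
        simp [hwh]
      · by_cases hy2 : y = v
        · rw [hy2, hHb]
          have : z ∉ G.neighborSet v := hvz
          rw [Set.ncard_insert_of_notMem this, hdv]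
          have hvw' : v ≠ w := fun h => hwv h.symm
          simp only [if_neg hvh, if_neg hvw']
          omega
        · by_cases hy3 : y = z
          · rw [hy3, hHc]
            have hw_in : w ∈ G.neighborSet z := hwz.symm
            have hv_not : v ∉ G.neighborSet z \ {w} := by
              intro hmem
              exact hvz (((SimpleGraph.mem_neighborSet _ _ _).mp hmem.1).symm)
            rw [Set.ncard_insert_of_notMem hv_not, Set.ncard_diff_singleton_of_mem hw_in]
            have hdz : (G.neighborSet z).ncard = d z := by
              simpa [hzhub, hzv] using hdeg z
            have : 0 < (G.neighborSet z).ncard := by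
              rw [Set.ncard_pos]; exact ⟨w, hw_in⟩
            rw [hdz]
            simp only [if_neg hzhub, if_neg hzw]
            omega
          · rw [hHo y hy1 hy2 hy3]
            by_cases hy4 : y = hub
            · subst hy4; simpa using hdh
            · simpa [hy4, hy2, hy1] using hdeg y
    · intro x hx
      have hhw : hub ≠ w := Ne.symm hwh
      have hhv : hub ≠ v := Ne.symm hvh
      rw [← SimpleGraph.mem_neighborSet, hHo hub hhw hhv (Ne.symm hzhub),
        SimpleGraph.mem_neighborSet]
      rcases Finset.mem_insert.mp hx with rfl | hxX
      · exact hGhw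
      · exact hGX x hxX
end

section
/- Supernode potential connectedness: Let (d_1,...,d_n) be a graphical degree sequence and let the vertices be partitioned into N blocks ('supernodes') with block degree sums D_1,...,D_N. If D_i ≥ 1 for all i (or N = 1) and (1/2)·Σ_i D_i ≥ N − 1, then there exists a simple graph realization of (d_1,...,d_n) in which contracting each block to a single node yields a connected graph. -/
open SimpleGraph

lemma reach_lift {V : Type*} {H H' : SimpleGraph V}
    (h : ∀ p q, H.Adj p q → H'.Reachable p q) :
    ∀ p q, H.Reachable p q → H'.Reachable p q := by
  intro p q ⟨w⟩
  induction w with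
  | nil => exact Reachable.refl _
  | cons a _ ih => exact (h _ _ a).trans ih

def HHc {n N : ℕ} (P : Fin n → Fin N) (G : SimpleGraph (Fin n)) : SimpleGraph (Fin N) :=
  SimpleGraph.fromRel (fun b c => ∃ u v : Fin n, P u = b ∧ P v = c ∧ G.Adj u v)

def Kd {n N : ℕ} (P : Fin n → Fin N) (G : SimpleGraph (Fin n)) (e : Sym2 (Fin n)) :
    SimpleGraph (Fin N) :=
  SimpleGraph.fromRel (fun b c => ∃ u v : Fin n, P u = b ∧ P v = c ∧ (G.Adj u v ∧ s(u,v) ≠ e))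

lemma HHc_adj {n N : ℕ} (P : Fin n → Fin N) (G : SimpleGraph (Fin n)) (p q : Fin N) :
    (HHc P G).Adj p q ↔ p ≠ q ∧
      ((∃ u v : Fin n, P u = p ∧ P v = q ∧ G.Adj u v) ∨
       (∃ u v : Fin n, P u = q ∧ P v = p ∧ G.Adj u v)) :=
  SimpleGraph.fromRel_adj _ _ _

lemma Kd_adj {n N : ℕ} (P : Fin n → Fin N) (G : SimpleGraph (Fin n)) (e : Sym2 (Fin n))
    (p q : Fin N) :
    (Kd P G e).Adj p q ↔ p ≠ q ∧
      ((∃ u v : Fin n, P u = p ∧ P v = q ∧ (G.Adj u v ∧ s(u,v) ≠ e)) ∨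
       (∃ u v : Fin n, P u = q ∧ P v = p ∧ (G.Adj u v ∧ s(u,v) ≠ e))) :=
  SimpleGraph.fromRel_adj _ _ _

lemma Kd_le {n N : ℕ} (P : Fin n → Fin N) (G : SimpleGraph (Fin n)) (e : Sym2 (Fin n))
    {p q : Fin N} (h : (Kd P G e).Adj p q) : (HHc P G).Adj p q := by
  rw [Kd_adj] at h
  rw [HHc_adj]
  obtain ⟨h1, h2⟩ := h
  refine ⟨h1, ?_⟩
  rcases h2 with ⟨u,v,hu,hv,huv,_⟩ | ⟨u,v,hu,hv,huv,_⟩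
  exacts [Or.inl ⟨u,v,hu,hv,huv⟩, Or.inr ⟨u,v,hu,hv,huv⟩]

def swapG {V : Type*} (G : SimpleGraph V) (a b x y : V) : SimpleGraph V where
  Adj u v := (G.Adj u v ∧ s(u,v) ≠ s(a,b) ∧ s(u,v) ≠ s(x,y)) ∨
    ((s(u,v) = s(a,x) ∨ s(u,v) = s(b,y)) ∧ u ≠ v)
  symm := by
    refine ⟨fun u v h => ?_⟩
    rw [Sym2.eq_swap (a := v) (b := u)]
    rcases h with ⟨h1, h2⟩ | ⟨h1, h2⟩
    · exact Or.inl ⟨h1.symm, h2⟩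
    · exact Or.inr ⟨h1, h2.symm⟩
  loopless := by
    refine ⟨fun u h => ?_⟩
    rcases h with ⟨h1, _⟩ | ⟨_, h2⟩
    · exact G.irrefl h1
    · exact h2 rfl

lemma swapG_adj {V : Type*} {G : SimpleGraph V} {a b x y u v : V} :
    (swapG G a b x y).Adj u v ↔ (G.Adj u v ∧ s(u,v) ≠ s(a,b) ∧ s(u,v) ≠ s(x,y)) ∨
    ((s(u,v) = s(a,x) ∨ s(u,v) = s(b,y)) ∧ u ≠ v) := Iff.rfl

lemma swapG_comm1 {V : Type*} (G : SimpleGraph V) (a b x y : V) :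
    swapG G a b x y = swapG G b a y x := by
  ext u v
  rw [swapG_adj, swapG_adj, Sym2.eq_swap (a := b) (b := a), Sym2.eq_swap (a := y) (b := x),
    Sym2.eq_swap (a := b) (b := y), Sym2.eq_swap (a := a) (b := x)]
  tauto

lemma swapG_comm2 {V : Type*} (G : SimpleGraph V) (a b x y : V) :
    swapG G a b x y = swapG G x y a b := by
  ext u v
  rw [swapG_adj, swapG_adj, Sym2.eq_swap (a := x) (b := a), Sym2.eq_swap (a := y) (b := b)]
  tauto

lemma swapG_nbr_a {V : Type*} {G : SimpleGraph V} {a b x y : V}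
    (hb : a ≠ b) (hx : a ≠ x) (hy : a ≠ y) :
    (swapG G a b x y).neighborSet a = insert x (G.neighborSet a \ {b}) := by
  ext w
  simp only [mem_neighborSet, swapG_adj, Set.mem_insert_iff, Set.mem_diff,
    Set.mem_singleton_iff, Sym2.eq_iff]
  aesop

lemma swapG_nbr_other {V : Type*} {G : SimpleGraph V} {a b x y v : V}
    (ha : v ≠ a) (hb : v ≠ b) (hx : v ≠ x) (hy : v ≠ y) :
    (swapG G a b x y).neighborSet v = G.neighborSet v := by
  ext w
  simp only [mem_neighborSet, swapG_adj, Sym2.eq_iff]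
  aesop

lemma ncard_swap_aux {V : Type*} [Finite V] {s : Set V} {p q : V}
    (hq : q ∈ s) (hp : p ∉ s) (hpq : p ≠ q) :
    (insert p (s \ {q})).ncard = s.ncard := by
  rw [Set.ncard_insert_of_notMem (by simp [hp]) ((s.toFinite).diff (t := {q})),
    Set.ncard_diff_singleton_of_mem hq]
  have : s.ncard ≠ 0 := by
    simp only [ne_eq, Set.ncard_eq_zero s.toFinite]
    exact fun h => by simp [h] at hq
  omega

lemma swapG_ncard {V : Type*} [Finite V] (G : SimpleGraph V) {a b x y : V}
    (hab : G.Adj a b) (hxy : G.Adj x y) (hax : ¬G.Adj a x) (hby : ¬G.Adj b y)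
    (hax' : a ≠ x) (hay : a ≠ y) (hbx : b ≠ x) (hby' : b ≠ y) :
    ∀ v, ((swapG G a b x y).neighborSet v).ncard = (G.neighborSet v).ncard := by
  have hab' := hab.ne
  have hxy' := hxy.ne
  intro v
  by_cases hva : v = a
  · rw [hva, swapG_nbr_a hab' hax' hay]
    exact ncard_swap_aux hab hax hbx.symm
  by_cases hvb : v = b
  · rw [hvb, swapG_comm1, swapG_nbr_a hab'.symm hby' hbx]
    exact ncard_swap_aux hab.symm hby hay.symm
  by_cases hvx : v = x
  · rw [hvx, swapG_comm2, swapG_nbr_a hxy' (Ne.symm hax') (Ne.symm hbx)]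
    exact ncard_swap_aux hxy (fun h => hax h.symm) hay
  by_cases hvy : v = y
  · rw [hvy, swapG_comm2, swapG_comm1, swapG_nbr_a hxy'.symm (Ne.symm hby') (Ne.symm hay)]
    exact ncard_swap_aux hxy.symm (fun h => hby h.symm) hbx
  · rw [swapG_nbr_other hva hvb hvx hvy]

lemma acyclic_insert {V : Type*} {G : SimpleGraph V} (hG : G.IsAcyclic) {p q : V}
    (h : ¬G.Reachable p q) : (G ⊔ fromEdgeSet {s(p,q)}).IsAcyclic := by
  intro u c hc
  by_cases he : s(p,q) ∈ c.edges
  · have := (adj_and_reachable_delete_edges_iff_exists_cycle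
      (G := G ⊔ fromEdgeSet {s(p,q)}) (v := p) (w := q)).mpr ⟨u, c, hc, he⟩
    refine h (this.2.mono ?_)
    intro u' v' h'
    rw [deleteEdges_adj] at h'
    rcases h'.1 with h'' | h''
    · exact h''
    · exact absurd ((fromEdgeSet_adj _).mp h'').1 h'.2
  · have hsub : ∀ e ∈ c.edges, e ∈ G.edgeSet := by
      intro e hece
      have := c.edges_subset_edgeSet hece
      rw [edgeSet_sup, edgeSet_fromEdgeSet] at this
      rcases this with h' | h'
      · exact h'
      · exact absurd h'.1.symm (by rintro rfl; exact he hece)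
    exact hG (c.transfer G hsub) (hc.transfer hsub)

lemma exists_tree_ext {N : ℕ} (hN : 0 < N) :
    ∀ (k : ℕ) (G : SimpleGraph (Fin N)), G.IsAcyclic →
    Nat.card (Sym2 (Fin N)) ≤ G.edgeSet.ncard + k →
    ∃ T, G ≤ T ∧ T.Connected ∧ T.IsAcyclic := by
  intro k
  induction k with
  | zero =>
    intro G hac hcard
    exfalso
    have huniv : G.edgeSet = Set.univ := by
      apply Set.eq_of_subset_of_ncard_le (Set.subset_univ _) ?_ (Set.toFinite _)
      rw [Set.ncard_univ]
      omega
    have : s(⟨0, hN⟩, (⟨0, hN⟩ : Fin N)) ∈ G.edgeSet := huniv ▸ Set.mem_univ _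
    rw [SimpleGraph.mem_edgeSet] at this
    exact G.irrefl this
  | succ k ih =>
    intro G hac hcard
    by_cases hconn : G.Connected
    · exact ⟨G, le_refl _, hconn, hac⟩
    · have hne : Nonempty (Fin N) := ⟨⟨0, hN⟩⟩
      rw [connected_iff] at hconn
      push_neg at hconn
      have hnp : ¬G.Preconnected := fun h => (hconn h).1 ⟨0, hN⟩
      rw [Preconnected] at hnp
      push_neg at hnp
      obtain ⟨p, q, hpq⟩ := hnp
      have hpq' : p ≠ q := fun h => hpq (h ▸ Reachable.refl p)
      have hnadj : s(p,q) ∉ G.edgeSet := fun h => hpq (SimpleGraph.Adj.reachable h)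
      have hedge : (G ⊔ fromEdgeSet {s(p,q)}).edgeSet = insert s(p,q) G.edgeSet := by
        rw [edgeSet_sup, edgeSet_fromEdgeSet]
        have : ({s(p,q)} : Set (Sym2 (Fin N))) \ Sym2.diagSet = {s(p,q)} := by
          ext e
          simp only [Set.mem_diff, Set.mem_singleton_iff, Set.mem_setOf_eq,
            and_iff_left_iff_imp]
          rintro rfl
          simp [Sym2.mem_diagSet, Sym2.isDiag_iff_proj_eq, hpq']
        rw [this, Set.union_comm, Set.singleton_union]
      obtain ⟨T, hle, hc, hac'⟩ := ih (G ⊔ fromEdgeSet {s(p,q)}) (acyclic_insert hac hpq) (by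
        rw [hedge, Set.ncard_insert_of_notMem hnadj (Set.toFinite _)]
        omega)
      exact ⟨T, le_trans le_sup_left hle, hc, hac'⟩

lemma acyclic_disconnected_bound {N : ℕ} (hN : 0 < N) {G : SimpleGraph (Fin N)}
    (ha : G.IsAcyclic) (hc : ¬G.Connected) : G.edgeSet.ncard + 2 ≤ N := by
  obtain ⟨T, hle, hTc, hTa⟩ := exists_tree_ext hN (Nat.card (Sym2 (Fin N))) G ha (by omega)
  have hT : T.IsTree := ⟨hTc, hTa⟩
  letI : Fintype T.edgeSet := Fintype.ofFinite _
  have hcard := hT.card_edgeFinset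
  rw [Fintype.card_fin] at hcard
  have hsub : G.edgeSet ⊂ T.edgeSet := by
    refine ⟨SimpleGraph.edgeSet_mono hle, fun hsub' => ?_⟩
    have : G = T := SimpleGraph.edgeSet_injective (le_antisymm (SimpleGraph.edgeSet_mono hle) hsub')
    exact hc (this ▸ hTc)
  have hlt : G.edgeSet.ncard < T.edgeSet.ncard := Set.ncard_lt_ncard hsub (Set.toFinite _)
  have : T.edgeSet.ncard = T.edgeFinset.card := Set.ncard_eq_toFinset_card' _
  omega

lemma realization_edge_bound {n N : ℕ} (d : Fin n → ℕ) (P : Fin n → Fin N) (D : Fin N → ℕ)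
    (hD : ∀ b, D b = ∑ v ∈ Finset.univ.filter (fun v => P v = b), d v)
    (hsum : 2 * (N - 1) ≤ ∑ b, D b)
    (G : SimpleGraph (Fin n)) (hreal : ∀ v, (G.neighborSet v).ncard = d v) :
    N - 1 ≤ G.edgeSet.ncard := by
  classical
  have hdeg : ∀ v, G.degree v = d v := fun v => by
    rw [← hreal v, ← card_neighborSet_eq_degree, Set.ncard_eq_toFinset_card, Set.toFinite_toFinset, Set.toFinset_card]
  have h1 : ∑ b, D b = ∑ v, d v := by
    simp only [hD]
    exact Finset.sum_fiberwise Finset.univ P d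
  have h2 : ∑ v, d v = 2 * G.edgeFinset.card := by
    rw [← sum_degrees_eq_twice_card_edges]
    exact Finset.sum_congr rfl fun v _ => (hdeg v).symm
  have h3 : G.edgeSet.ncard = G.edgeFinset.card := by
    rw [← Set.ncard_coe_finset, coe_edgeFinset]
  omega

/-- Supernode potential connectedness: let `d` be a graphical degree sequence and
let the vertices be partitioned into `N` blocks (supernodes) by the surjection
`P`, with block degree sums `D`. If `N = 1` or all `D b ≥ 1`, and half the total
degree sum is at least `N - 1`, then some simple realization of `d` has connected
block-contraction (between any two blocks there is a path). -/
theorem stmt19 {n N : ℕ} (hN : 0 < N) (d : Fin n → ℕ) (hgr : Graphical d)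
    (P : Fin n → Fin N) (hsurj : Function.Surjective P)
    (D : Fin N → ℕ)
    (hD : ∀ b, D b = ∑ v ∈ Finset.univ.filter (fun v => P v = b), d v)
    (hpos : N = 1 ∨ ∀ b, D b ≠ 0)
    (hsum : 2 * (N - 1) ≤ ∑ b, D b) :
    ∃ G : SimpleGraph (Fin n),
      (∀ v, (G.neighborSet v).ncard = d v) ∧
      (SimpleGraph.fromRel
        (fun b c => ∃ u v : Fin n, P u = b ∧ P v = c ∧ G.Adj u v)).Connected := by
  classical
  obtain ⟨G0, hG0⟩ := hgr
  have hS : ∃ k, ∃ G : SimpleGraph (Fin n), (∀ v, (G.neighborSet v).ncard = d v) ∧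
      Nat.card (HHc P G).ConnectedComponent = k := ⟨_, G0, hG0, rfl⟩
  obtain ⟨G, hreal, hcard⟩ := Nat.find_spec hS
  refine ⟨G, hreal, ?_⟩
  show (HHc P G).Connected
  by_contra hnc
  have hNB : Nonempty (Fin N) := ⟨⟨0, hN⟩⟩
  have hDpos : ∀ b, D b ≠ 0 := by
    rcases hpos with h1 | h2
    · exfalso
      apply hnc
      subst h1
      refine (connected_iff _).mpr ⟨fun u v => ?_, hNB⟩
      have huv : u = v := Subsingleton.elim u v
      exact huv ▸ Reachable.refl u
    · exact h2
  have hpre : ¬(HHc P G).Preconnected := fun h => hnc ((connected_iff _).mpr ⟨h, hNB⟩)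
  rw [SimpleGraph.Preconnected] at hpre
  push_neg at hpre
  obtain ⟨p₀, q₀, hp₀q₀⟩ := hpre
  -- existence of a good edge
  have hgood : ∃ a b : Fin n, G.Adj a b ∧
      (P a = P b ∨ (Kd P G s(a,b)).Reachable (P a) (P b)) := by
    by_contra hno
    push_neg at hno
    have hmapmem : ∀ e ∈ G.edgeSet, Sym2.map P e ∈ (HHc P G).edgeSet := by
      intro e he
      induction e using Sym2.ind with
      | _ u v =>
        rw [Sym2.map_pair_eq, mem_edgeSet]
        rw [mem_edgeSet] at he
        exact (HHc_adj P G _ _).mpr ⟨(hno u v he).1, Or.inl ⟨u, v, rfl, rfl, he⟩⟩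
    have hsurjE : ∀ e' ∈ (HHc P G).edgeSet, ∃ e ∈ G.edgeSet, Sym2.map P e = e' := by
      intro e' he'
      induction e' using Sym2.ind with
      | _ p q =>
        rw [mem_edgeSet, HHc_adj] at he'
        rcases he'.2 with ⟨u,v,hu,hv,huv⟩ | ⟨u,v,hu,hv,huv⟩
        · exact ⟨s(u,v), huv, by rw [Sym2.map_pair_eq, hu, hv]⟩
        · exact ⟨s(u,v), huv, by rw [Sym2.map_pair_eq, hu, hv, Sym2.eq_swap]⟩
    have key2 : ∀ (u1 v1 u2 v2 : Fin n), G.Adj u1 v1 → G.Adj u2 v2 →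
        s(P u1, P v1) = s(P u2, P v2) → s(u1,v1) = s(u2,v2) := by
      intro u1 v1 u2 v2 h1 h2 heq
      by_contra hne12
      apply (hno u1 v1 h1).2
      apply SimpleGraph.Adj.reachable
      rw [Kd_adj]
      refine ⟨(hno u1 v1 h1).1, ?_⟩
      rw [Sym2.eq_iff] at heq
      rcases heq with ⟨ha, hb⟩ | ⟨ha, hb⟩
      · exact Or.inl ⟨u2, v2, ha.symm, hb.symm, h2, fun h => hne12 h.symm⟩
      · refine Or.inl ⟨v2, u2, ha.symm, hb.symm, h2.symm, fun h => hne12 ?_⟩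
        rw [Sym2.eq_swap] at h
        exact h.symm
    have hinj : Set.InjOn (Sym2.map P) G.edgeSet := by
      intro e1 he1 e2 he2 heq
      revert he1 he2 heq
      induction e1 using Sym2.ind with
      | _ u1 v1 =>
        induction e2 using Sym2.ind with
        | _ u2 v2 =>
          intro he1 he2 heq
          rw [mem_edgeSet] at he1 he2
          rw [Sym2.map_pair_eq, Sym2.map_pair_eq] at heq
          exact key2 u1 v1 u2 v2 he1 he2 heq
    have himg : Sym2.map P '' G.edgeSet = (HHc P G).edgeSet := by
      apply Set.Subset.antisymm
      · rintro e' ⟨e, he, rfl⟩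
        exact hmapmem e he
      · intro e' he'
        obtain ⟨e, he, rfl⟩ := hsurjE e' he'
        exact ⟨e, he, rfl⟩
    have hEcard : (HHc P G).edgeSet.ncard = G.edgeSet.ncard := by
      rw [← himg, Set.ncard_image_of_injOn hinj]
    have hac : (HHc P G).IsAcyclic := by
      rw [isAcyclic_iff_forall_adj_isBridge]
      intro p q hpq
      have main : ∀ u v : Fin n, G.Adj u v → s(P u, P v) = s(p, q) →
          (HHc P G).IsBridge s(p,q) := by
        intro u v huv hmap
        rw [← hmap, isBridge_iff]
        · intro hreach
          apply (hno u v huv).2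
          refine Reachable.mono ?_ hreach
          intro p' q' h'
          rw [deleteEdges_adj] at h'
          obtain ⟨h1, h2⟩ := h'
          rw [HHc_adj] at h1
          rw [Kd_adj]
          refine ⟨h1.1, ?_⟩
          have hnotin : s(p', q') ≠ s(P u, P v) := by
            intro hcontra
            exact h2 (Set.mem_singleton_iff.mpr hcontra)
          rcases h1.2 with ⟨u',v',hu',hv',huv'⟩ | ⟨u',v',hu',hv',huv'⟩
          · refine Or.inl ⟨u', v', hu', hv', huv', fun hc => hnotin ?_⟩
            rw [← hu', ← hv']
            have := congrArg (Sym2.map P) hc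
            rwa [Sym2.map_pair_eq, Sym2.map_pair_eq] at this
          · refine Or.inr ⟨u', v', hu', hv', huv', fun hc => hnotin ?_⟩
            rw [← hu', ← hv', Sym2.eq_swap]
            have := congrArg (Sym2.map P) hc
            rwa [Sym2.map_pair_eq, Sym2.map_pair_eq] at this
      rw [HHc_adj] at hpq
      rcases hpq.2 with ⟨u,v,hu,hv,huv⟩ | ⟨u,v,hu,hv,huv⟩
      · exact main u v huv (by rw [hu, hv])
      · exact main u v huv (by rw [hu, hv, Sym2.eq_swap])
    have hbnd := acyclic_disconnected_bound hN hac hnc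
    have hbound := realization_edge_bound d P D hD hsum G hreal
    omega
  obtain ⟨a, b, hab, hQ⟩ := hgood
  have hblock : ∀ u v : Fin n, G.Adj u v → (HHc P G).Reachable (P u) (P v) := by
    intro u v huv
    by_cases h : P u = P v
    · rw [h]
    · exact SimpleGraph.Adj.reachable ((HHc_adj P G _ _).mpr ⟨h, Or.inl ⟨u,v,rfl,rfl,huv⟩⟩)
  have hRab : (HHc P G).Reachable (P a) (P b) := by
    rcases hQ with h | h
    · rw [h]
    · exact reach_lift (fun p q hpq => (Kd_le P G _ hpq).reachable) _ _ h
  have hfar : ∃ β, ¬(HHc P G).Reachable (P a) β := by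
    by_cases h : (HHc P G).Reachable (P a) p₀
    · exact ⟨q₀, fun h' => hp₀q₀ (h.symm.trans h')⟩
    · exact ⟨p₀, h⟩
  obtain ⟨β, hβ⟩ := hfar
  have hDβ := hDpos β
  rw [hD] at hDβ
  obtain ⟨x, hxmem, hdx⟩ := Finset.exists_ne_zero_of_sum_ne_zero hDβ
  have hPx : P x = β := (Finset.mem_filter.mp hxmem).2
  have hxcard : (G.neighborSet x).ncard ≠ 0 := by rw [hreal x]; exact hdx
  obtain ⟨y, hy⟩ := Set.nonempty_of_ncard_ne_zero hxcard
  have hxy : G.Adj x y := hy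
  have hax2 : ¬(HHc P G).Reachable (P a) (P x) := hPx ▸ hβ
  have hay2 : ¬(HHc P G).Reachable (P a) (P y) := fun h => hax2 (h.trans (hblock x y hxy).symm)
  have hbx2 : ¬(HHc P G).Reachable (P b) (P x) := fun h => hax2 (hRab.trans h)
  have hby2 : ¬(HHc P G).Reachable (P b) (P y) := fun h => hax2 (hRab.trans (h.trans (hblock x y hxy).symm))
  have hPax : P a ≠ P x := fun h => hax2 (h ▸ Reachable.refl (P a))
  have hPay : P a ≠ P y := fun h => hay2 (h ▸ Reachable.refl (P a))
  have hPbx : P b ≠ P x := fun h => hbx2 (h ▸ Reachable.refl (P b))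
  have hPby : P b ≠ P y := fun h => hby2 (h ▸ Reachable.refl (P b))
  have haxne : a ≠ x := fun h => hPax (congrArg P h)
  have hayne : a ≠ y := fun h => hPay (congrArg P h)
  have hbxne : b ≠ x := fun h => hPbx (congrArg P h)
  have hbyne : b ≠ y := fun h => hPby (congrArg P h)
  have hnax : ¬G.Adj a x := fun h => hax2 (hblock a x h)
  have hnby : ¬G.Adj b y := fun h => hby2 (hblock b y h)
  set G' := swapG G a b x y with hG'def
  have hreal' : ∀ v, (G'.neighborSet v).ncard = d v :=
    fun v => (swapG_ncard G hab hxy hnax hnby haxne hayne hbxne hbyne v).trans (hreal v)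
  have hsurv : ∀ u v : Fin n, G.Adj u v → s(u,v) ≠ s(a,b) → s(u,v) ≠ s(x,y) → G'.Adj u v :=
    fun u v h h1 h2 => Or.inl ⟨h, h1, h2⟩
  have hnew1 : (HHc P G').Adj (P a) (P x) :=
    (HHc_adj P G' _ _).mpr ⟨hPax, Or.inl ⟨a, x, rfl, rfl, Or.inr ⟨Or.inl rfl, haxne⟩⟩⟩
  have hnew2 : (HHc P G').Adj (P b) (P y) :=
    (HHc_adj P G' _ _).mpr ⟨hPby, Or.inl ⟨b, y, rfl, rfl, Or.inr ⟨Or.inr rfl, hbyne⟩⟩⟩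
  have hR1 : (HHc P G').Reachable (P a) (P b) := by
    rcases hQ with h | h
    · rw [h]
    · have walkind : ∀ (p q : Fin N) (w : (Kd P G s(a,b)).Walk p q),
          (HHc P G).Reachable (P a) p → (HHc P G').Reachable p q := by
        intro p q w
        induction w with
        | nil => exact fun _ => Reachable.refl _
        | @cons p r q hadj w ih =>
          intro hp
          have hpr : (HHc P G).Adj p r := Kd_le P G _ hadj
          rw [Kd_adj] at hadj
          obtain ⟨hne, hrel⟩ := hadj
          have hnxy : ∀ u v : Fin n, P u = p ∨ P v = p → G.Adj u v → s(u,v) ≠ s(x,y) := by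
            intro u v hup huv heq
            rw [Sym2.eq_iff] at heq
            have hreach_p : (HHc P G).Reachable (P a) p := hp
            rcases heq with ⟨rfl, rfl⟩ | ⟨rfl, rfl⟩
            · rcases hup with h' | h'
              · exact hax2 (h' ▸ hreach_p)
              · exact hay2 (h' ▸ hreach_p)
            · rcases hup with h' | h'
              · exact hay2 (h' ▸ hreach_p)
              · exact hax2 (h' ▸ hreach_p)
          have hpr' : (HHc P G').Adj p r := by
            rw [HHc_adj]
            refine ⟨hne, ?_⟩
            rcases hrel with ⟨u,v,hu,hv,huv,hne2⟩ | ⟨u,v,hu,hv,huv,hne2⟩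
            · exact Or.inl ⟨u, v, hu, hv, hsurv u v huv hne2 (hnxy u v (Or.inl hu) huv)⟩
            · exact Or.inr ⟨u, v, hu, hv, hsurv u v huv hne2 (hnxy u v (Or.inr hv) huv)⟩
          exact (hpr'.reachable).trans (ih (hp.trans hpr.reachable))
      obtain ⟨w⟩ := h
      exact walkind _ _ w (Reachable.refl _)
  have hmain : ∀ p q, (HHc P G).Adj p q → (HHc P G').Reachable p q := by
    have hmain2 : ∀ p q : Fin N, p ≠ q →
        (∃ u v : Fin n, P u = p ∧ P v = q ∧ G.Adj u v) → (HHc P G').Reachable p q := by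
      rintro p q hne ⟨u, v, hu, hv, huv⟩
      by_cases h1 : s(u,v) = s(a,b)
      · rw [Sym2.eq_iff] at h1
        rcases h1 with ⟨rfl, rfl⟩ | ⟨rfl, rfl⟩
        · exact hu ▸ hv ▸ hR1
        · exact hu ▸ hv ▸ hR1.symm
      by_cases h2 : s(u,v) = s(x,y)
      · rw [Sym2.eq_iff] at h2
        rcases h2 with ⟨rfl, rfl⟩ | ⟨rfl, rfl⟩
        · exact hu ▸ hv ▸ ((hnew1.reachable.symm.trans hR1).trans hnew2.reachable)
        · exact hu ▸ hv ▸ ((hnew1.reachable.symm.trans hR1).trans hnew2.reachable).symm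
      · exact SimpleGraph.Adj.reachable
          ((HHc_adj P G' _ _).mpr ⟨hne, Or.inl ⟨u,v,hu,hv,hsurv u v huv h1 h2⟩⟩)
    intro p q hpq
    rw [HHc_adj] at hpq
    rcases hpq.2 with h | h
    · exact hmain2 p q hpq.1 h
    · exact (hmain2 q p hpq.1.symm h).symm
  have hlift := reach_lift hmain
  letI : Fintype (HHc P G).ConnectedComponent := Fintype.ofFinite _
  letI : Fintype (HHc P G').ConnectedComponent := Fintype.ofFinite _
  let φ : (HHc P G).ConnectedComponent → (HHc P G').ConnectedComponent :=
    SimpleGraph.ConnectedComponent.lift (fun v => (HHc P G').connectedComponentMk v)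
      (fun v w pw _ => SimpleGraph.ConnectedComponent.sound (hlift v w ⟨pw⟩))
  have hφsurj : Function.Surjective φ :=
    fun c' => SimpleGraph.ConnectedComponent.ind
      (fun v => ⟨(HHc P G).connectedComponentMk v, rfl⟩) c'
  have hφninj : ¬Function.Injective φ := by
    intro hinj
    have h1 : φ ((HHc P G).connectedComponentMk (P a)) =
        φ ((HHc P G).connectedComponentMk (P x)) :=
      SimpleGraph.ConnectedComponent.sound hnew1.reachable
    have h2 := hinj h1
    rw [SimpleGraph.ConnectedComponent.eq] at h2
    exact hax2 h2
  have hlt := Fintype.card_lt_of_surjective_not_injective φ hφsurj hφninj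
  have hmem : ∃ G'' : SimpleGraph (Fin n), (∀ v, (G''.neighborSet v).ncard = d v) ∧
      Nat.card (HHc P G'').ConnectedComponent =
        Nat.card (HHc P G').ConnectedComponent := ⟨G', hreal', rfl⟩
  have hle := Nat.find_le (h := hS) hmem
  rw [Nat.card_eq_fintype_card] at hle hcard
  omega
end
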